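/- arXiv:2605.13515 — 7 statements merged into one kernel-verified Lean document; each statement's English description precedes it below -/
import Mathlib

section
/- The Jonquières group is the semidirect product of the diagonal torus and its unipotent part: Jonq_u(n) is a normal subgroup of Jonq(n), the intersection T_n ∩ Jonq_u(n) is trivial, and every φ ∈ Jonq(n) can be written as φ = t ∘ u with t ∈ T_n and u ∈ Jonq_u(n). -/
open MvPolynomial

noncomputable section

variable (k : Type*) [Field k] (n : ℕ)

/-- `Asub k n j` is the subalgebra of `k[x_1,…,x_n]` generated by the first `j` variables
`x_1, …, x_j`  (so `Asub k n 0 = k` and `Asub k n n` is everything). -/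
def Asub (j : ℕ) : Subalgebra k (MvPolynomial (Fin n) k) :=
  Algebra.adjoin k {P | ∃ i : Fin n, (i : ℕ) < j ∧ P = X i}

/-- The Jonquières subgroup of the automorphism group of affine `n`-space:
all `k`-algebra automorphisms `φ` of `k[x_1,…,x_n]` with `φ (Asub k n j) = Asub k n j`
for every `j = 1, …, n` (the condition for `j = 0` holds trivially). -/
def Jonq : Subgroup (MvPolynomial (Fin n) k ≃ₐ[k] MvPolynomial (Fin n) k) where
  carrier := {φ | ∀ j ≤ n,
    (Asub k n j).map (φ : MvPolynomial (Fin n) k →ₐ[k] MvPolynomial (Fin n) k) = Asub k n j}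
  one_mem' := by
    intro j _
    have h : ((1 : MvPolynomial (Fin n) k ≃ₐ[k] MvPolynomial (Fin n) k) :
        MvPolynomial (Fin n) k →ₐ[k] MvPolynomial (Fin n) k) = AlgHom.id k _ := by
      ext x; rfl
    rw [h, Subalgebra.map_id]
  mul_mem' := by
    intro φ ψ hφ hψ j hj
    have h : ((φ * ψ : MvPolynomial (Fin n) k ≃ₐ[k] MvPolynomial (Fin n) k) :
        MvPolynomial (Fin n) k →ₐ[k] MvPolynomial (Fin n) k)
        = (φ : MvPolynomial (Fin n) k →ₐ[k] MvPolynomial (Fin n) k).comp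
          (ψ : MvPolynomial (Fin n) k →ₐ[k] MvPolynomial (Fin n) k) := by
      ext x; rfl
    rw [h, ← Subalgebra.map_map, hψ j hj, hφ j hj]
  inv_mem' := by
    intro φ hφ j hj
    conv_lhs => rw [← hφ j hj]
    rw [Subalgebra.map_map]
    have h : ((φ⁻¹ : MvPolynomial (Fin n) k ≃ₐ[k] MvPolynomial (Fin n) k) :
          MvPolynomial (Fin n) k →ₐ[k] MvPolynomial (Fin n) k).comp
          (φ : MvPolynomial (Fin n) k →ₐ[k] MvPolynomial (Fin n) k) = AlgHom.id k _ := by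
      exact AlgHom.ext fun x => φ.symm_apply_apply x
    rw [h, Subalgebra.map_id]

lemma mem_Jonq_iff (φ : MvPolynomial (Fin n) k ≃ₐ[k] MvPolynomial (Fin n) k) :
    φ ∈ Jonq k n ↔ ∀ j ≤ n,
      (Asub k n j).map (φ : MvPolynomial (Fin n) k →ₐ[k] MvPolynomial (Fin n) k)
        = Asub k n j :=
  Iff.rfl

/-- The unipotent Jonquières subgroup: those `φ` in the Jonquières subgroup with
`φ (x_i) - x_i ∈ Asub k n (i-1)` for every `i = 1, …, n` (zero-indexed below). -/
def JonqU : Subgroup (MvPolynomial (Fin n) k ≃ₐ[k] MvPolynomial (Fin n) k) where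
  carrier := {φ | φ ∈ Jonq k n ∧ ∀ i : Fin n, φ (X i) - X i ∈ Asub k n (i : ℕ)}
  one_mem' := ⟨(Jonq k n).one_mem, fun i => by
    simpa using (Asub k n (i : ℕ)).zero_mem⟩
  mul_mem' := by
    rintro φ ψ ⟨hφJ, hφU⟩ ⟨hψJ, hψU⟩
    refine ⟨(Jonq k n).mul_mem hφJ hψJ, fun i => ?_⟩
    have h1 : φ (ψ (X i) - X i) ∈ Asub k n (i : ℕ) := by
      have h := (mem_Jonq_iff k n φ).mp hφJ (i : ℕ) (le_of_lt i.isLt)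
      rw [← h]
      exact Subalgebra.mem_map.mpr ⟨_, hψU i, rfl⟩
    have h2 : (φ * ψ) (X i) - X i = φ (ψ (X i) - X i) + (φ (X i) - X i) := by
      rw [AlgEquiv.mul_apply, map_sub]; ring
    rw [h2]
    exact add_mem h1 (hφU i)
  inv_mem' := by
    rintro φ ⟨hφJ, hφU⟩
    refine ⟨(Jonq k n).inv_mem hφJ, fun i => ?_⟩
    have h1 : φ⁻¹ (φ (X i) - X i) ∈ Asub k n (i : ℕ) := by
      have h := (mem_Jonq_iff k n φ⁻¹).mp ((Jonq k n).inv_mem hφJ) (i : ℕ) (le_of_lt i.isLt)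
      rw [← h]
      exact Subalgebra.mem_map.mpr ⟨_, hφU i, rfl⟩
    have h2 : φ⁻¹ (X i) - X i = -(φ⁻¹ (φ (X i) - X i)) := by
      rw [map_sub]
      have h : φ⁻¹ (φ (X i)) = X i := φ.symm_apply_apply (X i)
      rw [h]; ring
    rw [h2]
    exact neg_mem h1

/-- The diagonal torus: automorphisms `x_i ↦ a_i · x_i` with all `a_i ∈ kˣ`. -/
def Tn : Subgroup (MvPolynomial (Fin n) k ≃ₐ[k] MvPolynomial (Fin n) k) where
  carrier := {φ | ∃ a : Fin n → kˣ, ∀ i : Fin n, φ (X i) = C (a i : k) * X i}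
  one_mem' := ⟨1, fun i => by simp⟩
  mul_mem' := by
    rintro φ ψ ⟨a, ha⟩ ⟨b, hb⟩
    refine ⟨fun i => a i * b i, fun i => ?_⟩
    have hC : φ (C ((b i : k))) = C ((b i : k)) := by
      rw [← MvPolynomial.algebraMap_eq]; exact φ.commutes _
    rw [AlgEquiv.mul_apply, hb i, map_mul, ha i, hC, Units.val_mul, map_mul]
    ring
  inv_mem' := by
    rintro φ ⟨a, ha⟩
    refine ⟨fun i => (a i)⁻¹, fun i => ?_⟩
    have hC : φ (C (((a i)⁻¹ : kˣ) : k)) = C (((a i)⁻¹ : kˣ) : k) := by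
      rw [← MvPolynomial.algebraMap_eq]; exact φ.commutes _
    have key : φ (C (((a i)⁻¹ : kˣ) : k) * X i) = X i := by
      rw [map_mul, hC, ha i, ← mul_assoc, ← map_mul, Units.inv_mul, map_one, one_mul]
    have h := congrArg φ.symm key
    rw [AlgEquiv.symm_apply_apply] at h
    exact h.symm


namespace JonqAux

variable {k : Type*} [Field k] {n : ℕ}

lemma Asub_eq_supported (j : ℕ) :
    Asub k n j = MvPolynomial.supported k {m : Fin n | (m : ℕ) < j} := by
  unfold Asub MvPolynomial.supported
  congr 1
  ext P
  simp only [Set.mem_setOf_eq, Set.mem_image]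
  constructor
  · rintro ⟨i, hi, rfl⟩; exact ⟨i, hi, rfl⟩
  · rintro ⟨i, hi, rfl⟩; exact ⟨i, hi, rfl⟩

lemma X_mem_Asub {j : ℕ} {m : Fin n} :
    (X m : MvPolynomial (Fin n) k) ∈ Asub k n j ↔ (m : ℕ) < j := by
  rw [Asub_eq_supported]
  exact MvPolynomial.X_mem_supported

lemma C_mem_Asub (c : k) (j : ℕ) : (C c : MvPolynomial (Fin n) k) ∈ Asub k n j := by
  rw [← MvPolynomial.algebraMap_eq]
  exact Subalgebra.algebraMap_mem _ c

lemma apply_mem_Asub {φ : MvPolynomial (Fin n) k ≃ₐ[k] MvPolynomial (Fin n) k}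
    (hφ : φ ∈ Jonq k n) {j : ℕ} (hj : j ≤ n) {P : MvPolynomial (Fin n) k}
    (hP : P ∈ Asub k n j) : φ P ∈ Asub k n j := by
  rw [← (mem_Jonq_iff k n φ).mp hφ j hj]
  exact Subalgebra.mem_map.mpr ⟨P, hP, rfl⟩

lemma Asub_succ (i : Fin n) :
    Asub k n ((i : ℕ) + 1)
      = (Algebra.adjoin (↥(Asub k n (i : ℕ))) {(X i : MvPolynomial (Fin n) k)}).restrictScalars k := by
  have h1 : Asub k n ((i : ℕ) + 1) =
      Algebra.adjoin k ({P | ∃ m : Fin n, (m : ℕ) < (i : ℕ) ∧ P = X m}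
        ∪ {(X i : MvPolynomial (Fin n) k)}) := by
    unfold Asub
    congr 1
    ext P
    simp only [Set.mem_setOf_eq, Set.mem_union, Set.mem_singleton_iff]
    constructor
    · rintro ⟨m, hm, rfl⟩
      rcases Nat.lt_succ_iff_lt_or_eq.mp hm with h | h
      · exact Or.inl ⟨m, h, rfl⟩
      · exact Or.inr (by rw [Fin.val_injective h])
    · rintro (⟨m, hm, rfl⟩ | rfl)
      · exact ⟨m, Nat.lt_succ_of_lt hm, rfl⟩
      · exact ⟨i, Nat.lt_succ_self _, rfl⟩
  exact h1.trans (Algebra.adjoin_union_eq_adjoin_adjoin k _ _)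

lemma exists_poly {i : Fin n} {P : MvPolynomial (Fin n) k} (h : P ∈ Asub k n ((i : ℕ) + 1)) :
    ∃ q : Polynomial ↥(Asub k n (i : ℕ)), P = Polynomial.aeval (X i : MvPolynomial (Fin n) k) q := by
  rw [Asub_succ, Subalgebra.mem_restrictScalars, Algebra.adjoin_singleton_eq_range_aeval] at h
  obtain ⟨q, hq⟩ := h
  exact ⟨q, hq.symm⟩

end JonqAux

namespace JonqAux

variable {k : Type*} [Field k] {n : ℕ}

/-- The isomorphism separating the variable `i`. -/
def Tq (k : Type*) [Field k] {n : ℕ} (i : Fin n) :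
    MvPolynomial (Fin n) k ≃ₐ[k] Polynomial (MvPolynomial {j : Fin n // j ≠ i} k) :=
  (renameEquiv k (Equiv.optionSubtypeNe i).symm).trans (optionEquivLeft k {j : Fin n // j ≠ i})

lemma Tq_X_self (i : Fin n) : Tq k i (X i) = Polynomial.X := by
  simp [Tq, AlgEquiv.trans_apply, renameEquiv_apply, rename_X,
    Equiv.optionSubtypeNe_symm_self, optionEquivLeft_X_none]

lemma Tq_X_ne {i m : Fin n} (h : m ≠ i) :
    Tq k i (X m) = Polynomial.C (X ⟨m, h⟩) := by
  simp [Tq, AlgEquiv.trans_apply, renameEquiv_apply, rename_X,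
    Equiv.optionSubtypeNe_symm_of_ne h, optionEquivLeft_X_some]

lemma Tq_C (i : Fin n) (c : k) : Tq k i (C c) = Polynomial.C (C c) := by
  rw [← MvPolynomial.algebraMap_eq, AlgEquiv.commutes, Polynomial.algebraMap_apply,
    MvPolynomial.algebraMap_eq]

lemma Tq_constant {i : Fin n} {P : MvPolynomial (Fin n) k} (h : P ∈ Asub k n (i : ℕ)) :
    ∃ c, Tq k i P = Polynomial.C c := by
  refine Algebra.adjoin_induction (fun x hx => ?_) (fun r => ?_)
    (fun x y _ _ ihx ihy => ?_) (fun x y _ _ ihx ihy => ?_) h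
  · obtain ⟨m, hm, rfl⟩ := hx
    have hne : m ≠ i := fun he => by rw [he] at hm; exact absurd hm (lt_irrefl _)
    exact ⟨X ⟨m, hne⟩, Tq_X_ne hne⟩
  · exact ⟨C r, Tq_C i r⟩
  · obtain ⟨c1, h1⟩ := ihx
    obtain ⟨c2, h2⟩ := ihy
    exact ⟨c1 + c2, by rw [map_add, h1, h2, Polynomial.C_add]⟩
  · obtain ⟨c1, h1⟩ := ihx
    obtain ⟨c2, h2⟩ := ihy
    exact ⟨c1 * c2, by rw [map_mul, h1, h2, Polynomial.C_mul]⟩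

lemma exists_chi (i : Fin n) (ρ : MvPolynomial (Fin n) k →+* MvPolynomial (Fin n) k)
    (hρ : ∀ P ∈ Asub k n (i : ℕ), ρ P ∈ Asub k n (i : ℕ)) :
    ∃ Χ : ↥(Asub k n (i : ℕ)) →+* MvPolynomial {j : Fin n // j ≠ i} k,
      ∀ x : ↥(Asub k n (i : ℕ)), Tq k i (ρ ↑x) = Polynomial.C (Χ x) := by
  have key : ∀ x : ↥(Asub k n (i : ℕ)),
      Tq k i (ρ ↑x) = Polynomial.C ((Tq k i (ρ ↑x)).coeff 0) := by
    intro x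
    obtain ⟨c, hc⟩ := Tq_constant (hρ _ x.2)
    rw [hc, Polynomial.coeff_C_zero]
  refine ⟨{ toFun := fun x => (Tq k i (ρ ↑x)).coeff 0
            map_one' := ?_
            map_mul' := ?_
            map_zero' := ?_
            map_add' := ?_ }, fun x => key x⟩
  · show (Tq k i (ρ ↑(1 : ↥(Asub k n (i : ℕ))))).coeff 0 = 1
    rw [OneMemClass.coe_one, map_one, map_one, Polynomial.coeff_one_zero]
  · intro x y
    obtain ⟨cx, hx⟩ := Tq_constant (hρ _ x.2)
    obtain ⟨cy, hy⟩ := Tq_constant (hρ _ y.2)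
    show (Tq k i (ρ ↑(x * y))).coeff 0 = (Tq k i (ρ ↑x)).coeff 0 * (Tq k i (ρ ↑y)).coeff 0
    rw [MulMemClass.coe_mul, map_mul, map_mul, hx, hy, ← Polynomial.C_mul]
    simp only [Polynomial.coeff_C_zero]
  · show (Tq k i (ρ ↑(0 : ↥(Asub k n (i : ℕ))))).coeff 0 = 0
    rw [ZeroMemClass.coe_zero, map_zero, map_zero, Polynomial.coeff_zero]
  · intro x y
    obtain ⟨cx, hx⟩ := Tq_constant (hρ _ x.2)
    obtain ⟨cy, hy⟩ := Tq_constant (hρ _ y.2)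
    show (Tq k i (ρ ↑(x + y))).coeff 0 = (Tq k i (ρ ↑x)).coeff 0 + (Tq k i (ρ ↑y)).coeff 0
    rw [AddMemClass.coe_add, map_add, map_add, hx, hy, ← Polynomial.C_add]
    simp only [Polynomial.coeff_C_zero]

lemma isUnit_eq_C {m : ℕ} {p : MvPolynomial (Fin m) k} (h : IsUnit p) : ∃ a : k, p = C a := by
  induction m with
  | zero =>
    obtain ⟨a, rfl⟩ := MvPolynomial.C_surjective (Fin 0) p
    exact ⟨a, rfl⟩
  | succ m ih =>
    have h2 : IsUnit (finSuccEquiv k m p) := h.map (finSuccEquiv k m)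
    rw [Polynomial.isUnit_iff] at h2
    obtain ⟨r, hr, hCr⟩ := h2
    obtain ⟨a, rfl⟩ := ih hr
    have hfc : finSuccEquiv k m (C a) = Polynomial.C (C a) := by
      rw [← MvPolynomial.algebraMap_eq, AlgEquiv.commutes, Polynomial.algebraMap_apply,
        MvPolynomial.algebraMap_eq]
    exact ⟨a, (finSuccEquiv k m).injective (by rw [hfc, hCr])⟩

end JonqAux

namespace JonqAux

variable {k : Type*} [Field k] {n : ℕ}

lemma jonq_X_eq {φ : MvPolynomial (Fin n) k ≃ₐ[k] MvPolynomial (Fin n) k}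
    (hφ : φ ∈ Jonq k n) (i : Fin n) :
    ∃ a : kˣ, ∃ p ∈ Asub k n (i : ℕ), φ (X i) = C (a : k) * X i + p := by
  have hi1 : (i : ℕ) + 1 ≤ n := i.isLt
  have hii : (i : ℕ) ≤ n := le_of_lt i.isLt
  have hXmem : (X i : MvPolynomial (Fin n) k) ∈ Asub k n ((i : ℕ) + 1) :=
    X_mem_Asub.mpr (Nat.lt_succ_self _)
  have hw : φ (X i) ∈ Asub k n ((i : ℕ) + 1) := apply_mem_Asub hφ hi1 hXmem
  have hw' : φ.symm (X i) ∈ Asub k n ((i : ℕ) + 1) :=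
    apply_mem_Asub ((Jonq k n).inv_mem hφ) hi1 hXmem
  set A := Asub k n (i : ℕ) with hA
  set TR : MvPolynomial (Fin n) k →+* Polynomial (MvPolynomial {j : Fin n // j ≠ i} k) :=
    (Tq k i : MvPolynomial (Fin n) k →+* Polynomial (MvPolynomial {j : Fin n // j ≠ i} k))
    with hTR
  have hTRapp : ∀ P, TR P = Tq k i P := fun _ => rfl
  set W := Tq k i (φ (X i)) with hWdef
  obtain ⟨q, hq⟩ := exists_poly hw
  obtain ⟨q', hq'⟩ := exists_poly hw'
  obtain ⟨Χ, hΧ⟩ := exists_chi (k := k) i (RingHom.id _) (fun P hP => hP)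
  obtain ⟨Χ', hΧ'⟩ := exists_chi (k := k) i ((φ : MvPolynomial (Fin n) k →ₐ[k] MvPolynomial (Fin n) k) :
      MvPolynomial (Fin n) k →+* MvPolynomial (Fin n) k)
    (fun P hP => apply_mem_Asub hφ hii hP)
  -- W = q.map Χ
  have hqW : W = q.map Χ := by
    have e1 : TR (Polynomial.eval₂ (algebraMap ↥A (MvPolynomial (Fin n) k)) (X i) q)
        = Polynomial.eval₂ (TR.comp (algebraMap ↥A (MvPolynomial (Fin n) k))) (TR (X i)) q :=
      Polynomial.hom_eval₂ _ _ _ _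
    have e2 : TR.comp (algebraMap ↥A (MvPolynomial (Fin n) k)) = Polynomial.C.comp Χ :=
      RingHom.ext fun x => hΧ x
    have e3 : TR (X i) = Polynomial.X := Tq_X_self i
    calc W = TR (Polynomial.aeval (X i : MvPolynomial (Fin n) k) q) := by
            rw [hWdef, hq, hTRapp]
      _ = Polynomial.eval₂ (Polynomial.C.comp Χ) Polynomial.X q := by
            rw [Polynomial.aeval_def, e1, e2, e3]
      _ = Polynomial.eval₂ Polynomial.C Polynomial.X (q.map Χ) := (Polynomial.eval₂_map _ _ _).symm
      _ = q.map Χ := Polynomial.eval₂_C_X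
  -- X = (q'.map Χ').comp W
  set ΨR : MvPolynomial (Fin n) k →+* Polynomial (MvPolynomial {j : Fin n // j ≠ i} k) :=
    TR.comp ((φ : MvPolynomial (Fin n) k →ₐ[k] MvPolynomial (Fin n) k) :
      MvPolynomial (Fin n) k →+* MvPolynomial (Fin n) k) with hΨR
  have hcomp : (Polynomial.X : Polynomial (MvPolynomial {j : Fin n // j ≠ i} k))
      = (q'.map Χ').comp W := by
    have e1 : ΨR (Polynomial.eval₂ (algebraMap ↥A (MvPolynomial (Fin n) k)) (X i) q')
        = Polynomial.eval₂ (ΨR.comp (algebraMap ↥A (MvPolynomial (Fin n) k))) (ΨR (X i)) q' :=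
      Polynomial.hom_eval₂ _ _ _ _
    have e2 : ΨR.comp (algebraMap ↥A (MvPolynomial (Fin n) k)) = Polynomial.C.comp Χ' :=
      RingHom.ext fun x => hΧ' x
    have e4 : ΨR (φ.symm (X i)) = Polynomial.X := by
      show TR (φ (φ.symm (X i))) = Polynomial.X
      rw [φ.apply_symm_apply, hTRapp, Tq_X_self]
    have e5 : ΨR (X i) = W := rfl
    calc (Polynomial.X : Polynomial (MvPolynomial {j : Fin n // j ≠ i} k))
        = ΨR (φ.symm (X i)) := e4.symm
      _ = ΨR (Polynomial.aeval (X i : MvPolynomial (Fin n) k) q') := by rw [← hq']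
      _ = Polynomial.eval₂ (Polynomial.C.comp Χ') W q' := by
            rw [Polynomial.aeval_def, e1, e2, e5]
      _ = Polynomial.eval₂ Polynomial.C W (q'.map Χ') := (Polynomial.eval₂_map _ _ _).symm
      _ = (q'.map Χ').comp W := rfl
  -- degrees
  have hdeg : (q'.map Χ').natDegree * W.natDegree = 1 := by
    have h6 := congrArg Polynomial.natDegree hcomp
    rwa [Polynomial.natDegree_X, Polynomial.natDegree_comp, eq_comm] at h6
  have hdW : W.natDegree = 1 := Nat.eq_one_of_mul_eq_one_left hdeg
  have hdg : (q'.map Χ').natDegree = 1 := Nat.eq_one_of_mul_eq_one_right hdeg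
  obtain ⟨c1, hc1ne, c0, hWeq⟩ := Polynomial.natDegree_eq_one.mp hdW
  obtain ⟨g1, hg1ne, g0, hgeq⟩ := Polynomial.natDegree_eq_one.mp hdg
  -- unit relation
  have hg1c1 : g1 * c1 = 1 := by
    have h5 : (Polynomial.X : Polynomial (MvPolynomial {j : Fin n // j ≠ i} k))
        = (Polynomial.C g1 * Polynomial.X + Polynomial.C g0).comp
            (Polynomial.C c1 * Polynomial.X + Polynomial.C c0) := by
      rw [hgeq, hWeq]; exact hcomp
    have h6 := congrArg (fun pp => Polynomial.coeff pp 1) h5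
    simpa [Polynomial.add_comp, Polynomial.mul_comp, Polynomial.C_comp, Polynomial.X_comp,
      Polynomial.coeff_add, Polynomial.coeff_C_mul, Polynomial.coeff_C, mul_add] using h6.symm
  -- coefficients of W
  have hWmap : Polynomial.C c1 * Polynomial.X + Polynomial.C c0 = q.map Χ := hWeq.trans hqW
  have hc1 : Χ (q.coeff 1) = c1 := by
    have h7 := congrArg (fun pp => Polynomial.coeff pp 1) hWmap
    simpa [Polynomial.coeff_map, Polynomial.coeff_add, Polynomial.coeff_C_mul,
      Polynomial.coeff_C] using h7.symm
  have hc0 : Χ (q.coeff 0) = c0 := by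
    have h7 := congrArg (fun pp => Polynomial.coeff pp 0) hWmap
    simpa [Polynomial.coeff_map, Polynomial.coeff_add, Polynomial.coeff_C_mul,
      Polynomial.coeff_C] using h7.symm
  -- the leading coefficient, as element of R
  have hTx1 : Tq k i ((q.coeff 1 : ↥A) : MvPolynomial (Fin n) k) = Polynomial.C c1 :=
    (hΧ (q.coeff 1)).trans (by rw [hc1])
  have hTx0 : Tq k i ((q.coeff 0 : ↥A) : MvPolynomial (Fin n) k) = Polynomial.C c0 :=
    (hΧ (q.coeff 0)).trans (by rw [hc0])
  have hx1unit : IsUnit ((q.coeff 1 : ↥A) : MvPolynomial (Fin n) k) := by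
    have hu : IsUnit (Polynomial.C c1 : Polynomial (MvPolynomial {j : Fin n // j ≠ i} k)) :=
      IsUnit.of_mul_eq_one (Polynomial.C g1)
        (by rw [← Polynomial.C_mul, mul_comm c1 g1, hg1c1, Polynomial.C_1])
    have h8 := hu.map (Tq k i).symm
    rwa [← hTx1, AlgEquiv.symm_apply_apply] at h8
  obtain ⟨a, hx1C⟩ := isUnit_eq_C hx1unit
  have hane : a ≠ 0 := by
    rintro rfl
    rw [hx1C, map_zero] at hx1unit
    exact hx1unit.ne_zero rfl
  -- final reconstruction
  have hfin : φ (X i) = ((q.coeff 1 : ↥A) : MvPolynomial (Fin n) k) * X i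
      + ((q.coeff 0 : ↥A) : MvPolynomial (Fin n) k) := by
    apply (Tq k i).injective
    rw [map_add, map_mul, hTx1, hTx0, Tq_X_self]
    exact hWeq.symm
  refine ⟨(isUnit_iff_ne_zero.mpr hane).unit, ((q.coeff 0 : ↥A) : MvPolynomial (Fin n) k),
    (q.coeff 0).2, ?_⟩
  rw [hfin, hx1C, IsUnit.unit_spec]

end JonqAux

namespace JonqAux

variable {k : Type*} [Field k] {n : ℕ}

lemma algEquiv_C (ψ : MvPolynomial (Fin n) k ≃ₐ[k] MvPolynomial (Fin n) k) (c : k) :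
    ψ (C c) = C c := by
  rw [← MvPolynomial.algebraMap_eq]; exact ψ.commutes c

/-- The diagonal automorphism `x_i ↦ a_i x_i`. -/
def diag (a : Fin n → kˣ) : MvPolynomial (Fin n) k ≃ₐ[k] MvPolynomial (Fin n) k :=
  AlgEquiv.ofAlgHom (aeval fun i => C (a i : k) * X i) (aeval fun i => C (((a i)⁻¹ : kˣ) : k) * X i)
    (by
      apply MvPolynomial.algHom_ext
      intro i
      simp only [AlgHom.comp_apply, aeval_X, AlgHom.id_apply, map_mul]
      rw [aeval_C, MvPolynomial.algebraMap_eq, ← mul_assoc, ← C_mul,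
        Units.inv_mul, C_1, one_mul])
    (by
      apply MvPolynomial.algHom_ext
      intro i
      simp only [AlgHom.comp_apply, aeval_X, AlgHom.id_apply, map_mul]
      rw [aeval_C, MvPolynomial.algebraMap_eq, ← mul_assoc, ← C_mul,
        Units.mul_inv, C_1, one_mul])

lemma diag_X (a : Fin n → kˣ) (i : Fin n) : diag a (X i) = C (a i : k) * X i := by
  show (aeval fun i => C (a i : k) * X i : MvPolynomial (Fin n) k →ₐ[k] MvPolynomial (Fin n) k)
    (X i) = _
  rw [aeval_X]

lemma diag_symm_X (a : Fin n → kˣ) (i : Fin n) :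
    (diag a).symm (X i) = C (((a i)⁻¹ : kˣ) : k) * X i := by
  show (aeval fun i => C (((a i)⁻¹ : kˣ) : k) * X i :
    MvPolynomial (Fin n) k →ₐ[k] MvPolynomial (Fin n) k) (X i) = _
  rw [aeval_X]

lemma maps_le_of_diagonal (ψ : MvPolynomial (Fin n) k →ₐ[k] MvPolynomial (Fin n) k)
    (h : ∀ m : Fin n, ∃ c : k, ψ (X m) = C c * X m) (j : ℕ) :
    (Asub k n j).map ψ ≤ Asub k n j := by
  unfold Asub
  rw [AlgHom.map_adjoin]
  apply Algebra.adjoin_le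
  rintro P ⟨Q, ⟨m, hm, rfl⟩, rfl⟩
  obtain ⟨c, hc⟩ := h m
  rw [hc]
  exact mul_mem (Subalgebra.algebraMap_mem _ c) (Algebra.subset_adjoin ⟨m, hm, rfl⟩)

lemma mem_Jonq_of_maps_le {ψ : MvPolynomial (Fin n) k ≃ₐ[k] MvPolynomial (Fin n) k}
    (h1 : ∀ j : ℕ, (Asub k n j).map ↑ψ ≤ Asub k n j)
    (h2 : ∀ j : ℕ, (Asub k n j).map ↑ψ.symm ≤ Asub k n j) : ψ ∈ Jonq k n := by
  refine (mem_Jonq_iff k n ψ).mpr fun j _ => ?_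
  refine le_antisymm (h1 j) fun P hP => ?_
  exact Subalgebra.mem_map.mpr ⟨ψ.symm P, h2 j (Subalgebra.mem_map.mpr ⟨P, hP, rfl⟩),
    ψ.apply_symm_apply P⟩

lemma diag_mem_Jonq (a : Fin n → kˣ) : diag a ∈ Jonq k n :=
  mem_Jonq_of_maps_le
    (maps_le_of_diagonal _ fun m => ⟨(a m : k), diag_X a m⟩)
    (maps_le_of_diagonal _ fun m => ⟨(((a m)⁻¹ : kˣ) : k), diag_symm_X a m⟩)

end JonqAux

open JonqAux

/-- The Jonquières group is the semidirect product of the diagonal torus and its unipotent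
part: `JonqU` is normal in `Jonq`, meets the torus trivially, and every element of `Jonq`
is a product `t * u` with `t` in the torus and `u` unipotent. -/
theorem jonq_semidirect [IsAlgClosed k] (hn : 1 ≤ n) :
    (∀ φ ∈ Jonq k n, ∀ u ∈ JonqU k n, φ * u * φ⁻¹ ∈ JonqU k n) ∧
    (Tn k n ⊓ JonqU k n = ⊥) ∧
    (∀ φ ∈ Jonq k n, ∃ t ∈ Tn k n, ∃ u ∈ JonqU k n, φ = t * u) := by
  refine ⟨?_, ?_, ?_⟩
  · -- normality
    rintro φ hφ u ⟨huJ, huU⟩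
    refine ⟨(Jonq k n).mul_mem ((Jonq k n).mul_mem hφ huJ) ((Jonq k n).inv_mem hφ), fun i => ?_⟩
    have hii : (i : ℕ) ≤ n := le_of_lt i.isLt
    obtain ⟨b, qq, hqqA, hb⟩ := jonq_X_eq ((Jonq k n).inv_mem hφ) i
    have hc : u (X i) - X i ∈ Asub k n (i : ℕ) := huU i
    have hr : C (b : k) * (u (X i) - X i) + (u qq - qq) ∈ Asub k n (i : ℕ) :=
      add_mem (mul_mem (C_mem_Asub _ _) hc)
        (sub_mem (apply_mem_Asub huJ hii hqqA) hqqA)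
    have hcompute : (φ * u * φ⁻¹) (X i) - X i
        = φ (C (b : k) * (u (X i) - X i) + (u qq - qq)) := by
      have h1 : (φ * u * φ⁻¹) (X i) = φ (u ((φ⁻¹ : _) (X i))) := rfl
      have h2 : C (b : k) * u (X i) + u qq
          = (C (b : k) * (u (X i) - X i) + (u qq - qq)) + (C (b : k) * X i + qq) := by ring
      have h3 : (φ⁻¹ : MvPolynomial (Fin n) k ≃ₐ[k] MvPolynomial (Fin n) k) (X i)
          = C (b : k) * X i + qq := hb
      rw [h1, h3, map_add, map_mul, algEquiv_C u, h2, map_add, ← h3]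
      have h4 : φ ((φ⁻¹ : MvPolynomial (Fin n) k ≃ₐ[k] MvPolynomial (Fin n) k) (X i)) = X i :=
        φ.apply_symm_apply (X i)
      rw [h4]
      ring
    rw [hcompute]
    exact apply_mem_Asub hφ hii hr
  · -- trivial intersection
    refine (Subgroup.eq_bot_iff_forall _).mpr fun φ hφ => ?_
    rw [Subgroup.mem_inf] at hφ
    obtain ⟨⟨a, ha⟩, hU⟩ := hφ
    have key : ∀ i : Fin n, (a i : k) = 1 := by
      intro i
      by_contra hne
      have h1 : φ (X i) - X i ∈ Asub k n (i : ℕ) := hU.2 i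
      rw [ha i] at h1
      have h2 : C ((a i : k) - 1) * X i = C (a i : k) * X i - X i := by
        rw [C_sub, sub_mul, C_1, one_mul]
      rw [← h2] at h1
      have hd : ((a i : k) - 1) ≠ 0 := sub_ne_zero.mpr hne
      have h3 := mul_mem (C_mem_Asub (((a i : k) - 1)⁻¹) ((i : ℕ))) h1
      have h4 : C (((a i : k) - 1)⁻¹) * (C ((a i : k) - 1) * X i) = X i := by
        rw [← mul_assoc, ← C_mul, inv_mul_cancel₀ hd, C_1, one_mul]
      rw [h4] at h3
      exact absurd (X_mem_Asub.mp h3) (lt_irrefl _)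
    have hAH : (φ : MvPolynomial (Fin n) k →ₐ[k] MvPolynomial (Fin n) k)
        = AlgHom.id k (MvPolynomial (Fin n) k) := by
      apply MvPolynomial.algHom_ext
      intro i
      show φ (X i) = X i
      rw [ha i, key i, C_1, one_mul]
    exact AlgEquiv.ext fun P => DFunLike.congr_fun hAH P
  · -- decomposition
    intro φ hφ
    choose a p hmem heq using jonq_X_eq hφ
    refine ⟨diag a, ⟨a, fun i => diag_X a i⟩, (diag a)⁻¹ * φ,
      ⟨(Jonq k n).mul_mem ((Jonq k n).inv_mem (diag_mem_Jonq a)) hφ, fun i => ?_⟩,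
      (mul_inv_cancel_left _ _).symm⟩
    have h1 : ((diag a)⁻¹ * φ) (X i) = (diag a).symm (φ (X i)) := rfl
    rw [h1, heq i, map_add, map_mul, algEquiv_C (diag a).symm, diag_symm_X]
    have h2 : C ((a i : k)) * (C (((a i)⁻¹ : kˣ) : k) * X i) = X i := by
      rw [← mul_assoc, ← C_mul, Units.mul_inv, C_1, one_mul]
    rw [h2, add_sub_cancel_left]
    exact apply_mem_Asub ((Jonq k n).inv_mem (diag_mem_Jonq a)) (le_of_lt i.isLt) (hmem i)

end
end

section
/- An automorphism φ ∈ G lies in the Jonquières subgroup Jonq(n) if and only if for every i = 1,…,n there exist a unit a_i ∈ kˣ and an element p_i ∈ A_{i−1} (a polynomial in x_1,…,x_{i−1}) such that φ(x_i) = a_i·x_i + p_i. -/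
open MvPolynomial

noncomputable section

variable (k : Type*) [Field k] (n : ℕ)

lemma Asub_mono {j j' : ℕ} (h : j ≤ j') : Asub k n j ≤ Asub k n j' :=
  Algebra.adjoin_mono (fun _P hP => by
    obtain ⟨m, hm, rfl⟩ := hP
    exact ⟨m, lt_of_lt_of_le hm h, rfl⟩)

lemma isUnit_eq_C {m : ℕ} (u : MvPolynomial (Fin m) k) (hu : IsUnit u) :
    ∃ a : kˣ, u = C (a : k) := by
  induction m with
  | zero =>
    refine ⟨(hu.map (constantCoeff (σ := Fin 0) (R := k))).unit, ?_⟩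
    rw [IsUnit.unit_spec]
    simpa [constantCoeff_eq] using eq_C_of_isEmpty u
  | succ m ih =>
    have hu' := hu.map (finSuccEquiv k m)
    have h0 : (finSuccEquiv k m u).natDegree = 0 :=
      Polynomial.natDegree_eq_zero_of_isUnit hu'
    have hC : finSuccEquiv k m u = Polynomial.C ((finSuccEquiv k m u).coeff 0) :=
      Polynomial.eq_C_of_natDegree_eq_zero h0
    have hw : IsUnit ((finSuccEquiv k m u).coeff 0) := by
      rw [hC] at hu'; exact Polynomial.isUnit_C.mp hu'
    obtain ⟨a, ha⟩ := ih _ hw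
    refine ⟨a, ?_⟩
    have h2 := congrArg (finSuccEquiv k m).symm hC
    rw [AlgEquiv.symm_apply_apply, ha] at h2
    rw [h2]
    have h3 := RingHom.congr_fun (finSuccEquiv_comp_C_eq_C (R := k) m) (a : k)
    simpa [RingHom.comp_apply] using h3

/-- `φ` belongs to the Jonquières subgroup iff each `φ (x_i)` has the triangular form
`a_i · x_i + p_i` with `a_i ∈ kˣ` and `p_i` a polynomial in `x_1, …, x_{i-1}`. -/
theorem mem_jonq_iff_triangular [IsAlgClosed k] (hn : 1 ≤ n)
    (φ : MvPolynomial (Fin n) k ≃ₐ[k] MvPolynomial (Fin n) k) :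
    φ ∈ Jonq k n ↔
      ∀ i : Fin n, ∃ (a : kˣ) (p : MvPolynomial (Fin n) k),
        p ∈ Asub k n (i : ℕ) ∧ φ (X i) = C (a : k) * X i + p := by
  constructor
  · intro hφ i
    set B := Asub k n (i : ℕ) with hB
    have hin : (i : ℕ) + 1 ≤ n := i.isLt
    have hBmap : (Asub k n (i : ℕ)).map
        (φ : MvPolynomial (Fin n) k →ₐ[k] MvPolynomial (Fin n) k) = Asub k n (i : ℕ) :=
      hφ (i : ℕ) (le_of_lt i.isLt)
    have hSmap : (Asub k n ((i : ℕ) + 1)).map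
        (φ : MvPolynomial (Fin n) k →ₐ[k] MvPolynomial (Fin n) k) = Asub k n ((i : ℕ) + 1) :=
      hφ ((i : ℕ) + 1) hin
    set f := φ (X i) with hf
    -- transcendence of X i over B
    have htr : Transcendental B (X i : MvPolynomial (Fin n) k) := by
      have h1 : AlgebraicIndependent k
          (fun m : {m : Fin n // (m : ℕ) < (i : ℕ)} => (X m.1 : MvPolynomial (Fin n) k)) :=
        (MvPolynomial.algebraicIndependent_X (Fin n) k).comp Subtype.val Subtype.val_injective
      have h2 : AlgebraicIndependent k
          (fun o : Option {m : Fin n // (m : ℕ) < (i : ℕ)} =>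
            o.elim (X i) (fun m => (X m.1 : MvPolynomial (Fin n) k))) := by
        have hinj : Function.Injective
            (fun o : Option {m : Fin n // (m : ℕ) < (i : ℕ)} => o.elim i Subtype.val) := by
          rintro (_ | ⟨m, hm⟩) (_ | ⟨m', hm'⟩) h
          · rfl
          · exact absurd (congrArg (Fin.val) h.symm) (Nat.ne_of_lt hm').elim
          · exact absurd (congrArg (Fin.val) h) (Nat.ne_of_lt hm).elim
          · simp only [Option.elim] at h
            exact congrArg some (Subtype.ext h)
        have h3 := (MvPolynomial.algebraicIndependent_X (Fin n) k).comp _ hinj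
        convert h3 using 1
        funext o
        cases o <;> rfl
      have h3 := (h1.option_iff_transcendental (X i)).1 h2
      have hrange : Set.range
          (fun m : {m : Fin n // (m : ℕ) < (i : ℕ)} => (X m.1 : MvPolynomial (Fin n) k))
          = {P | ∃ m : Fin n, (m : ℕ) < (i : ℕ) ∧ P = X m} := by
        ext P
        constructor
        · rintro ⟨⟨m, hm⟩, rfl⟩; exact ⟨m, hm, rfl⟩
        · rintro ⟨m, hm, rfl⟩; exact ⟨⟨m, hm⟩, rfl⟩
      rw [hrange] at h3
      exact h3
    have hinj : Function.Injective
        (Polynomial.aeval (X i : MvPolynomial (Fin n) k) :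
          Polynomial B →ₐ[B] MvPolynomial (Fin n) k) :=
      transcendental_iff_injective.mp htr
    -- X i ∈ B[f]
    have hXmem : (X i : MvPolynomial (Fin n) k) ∈ Algebra.adjoin B {f} := by
      have h1 : (X i : MvPolynomial (Fin n) k) ∈ Asub k n ((i : ℕ) + 1) :=
        Algebra.subset_adjoin ⟨i, Nat.lt_succ_self _, rfl⟩
      rw [← hSmap, Asub, AlgHom.map_adjoin] at h1
      have himage : (φ : MvPolynomial (Fin n) k →ₐ[k] MvPolynomial (Fin n) k) ''
          {P | ∃ m : Fin n, (m : ℕ) < (i : ℕ) + 1 ∧ P = X m}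
          ⊆ (B : Set (MvPolynomial (Fin n) k)) ∪ {f} := by
        rintro _ ⟨P, ⟨m, hm, rfl⟩, rfl⟩
        rcases Nat.lt_succ_iff_lt_or_eq.mp hm with hm' | hm'
        · left
          have hmem : X m ∈ Asub k n (i : ℕ) := Algebra.subset_adjoin ⟨m, hm', rfl⟩
          have hmem2 : φ (X m) ∈ (Asub k n (i : ℕ)).map
              (φ : MvPolynomial (Fin n) k →ₐ[k] MvPolynomial (Fin n) k) := ⟨X m, hmem, rfl⟩
          rwa [hBmap] at hmem2
        · right
          have : m = i := Fin.ext hm'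
          subst this
          rfl
      have h2 := Algebra.adjoin_mono himage h1
      have h3 : Algebra.adjoin k ((B : Set (MvPolynomial (Fin n) k)) ∪ {f})
          ≤ (Algebra.adjoin B {f}).restrictScalars k := by
        apply Algebra.adjoin_le
        rintro x (hx | hx)
        · exact (Subalgebra.mem_restrictScalars k).mpr ((Algebra.adjoin B {f}).algebraMap_mem ⟨x, hx⟩)
        · exact (Subalgebra.mem_restrictScalars k).mpr (Algebra.subset_adjoin hx)
      have h4 := h3 h2
      rwa [Subalgebra.mem_restrictScalars k] at h4
    -- f ∈ B[X i]
    have hfmem : f ∈ Algebra.adjoin B {(X i : MvPolynomial (Fin n) k)} := by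
      have h1 : f ∈ Asub k n ((i : ℕ) + 1) := by
        rw [← hSmap]
        exact ⟨X i, Algebra.subset_adjoin ⟨i, Nat.lt_succ_self _, rfl⟩, rfl⟩
      have h2 : Asub k n ((i : ℕ) + 1)
          ≤ (Algebra.adjoin B {(X i : MvPolynomial (Fin n) k)}).restrictScalars k := by
        apply Algebra.adjoin_le
        rintro _ ⟨m, hm, rfl⟩
        rcases Nat.lt_succ_iff_lt_or_eq.mp hm with hm' | hm'
        · have hb : X m ∈ B := Algebra.subset_adjoin ⟨m, hm', rfl⟩
          exact (Subalgebra.mem_restrictScalars k).mpr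
            ((Algebra.adjoin B {(X i : MvPolynomial (Fin n) k)}).algebraMap_mem ⟨X m, hb⟩)
        · have : m = i := Fin.ext hm'
          subst this
          exact (Subalgebra.mem_restrictScalars k).mpr (Algebra.subset_adjoin rfl)
      have h3 := h2 h1
      rwa [Subalgebra.mem_restrictScalars k] at h3
    rw [Algebra.adjoin_singleton_eq_range_aeval] at hXmem hfmem
    obtain ⟨P, hP⟩ := (AlgHom.mem_range _).mp hXmem
    obtain ⟨F, hF⟩ := (AlgHom.mem_range _).mp hfmem
    have hcomp : P.comp F = Polynomial.X := by
      apply hinj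
      rw [Polynomial.aeval_comp, hF, hP, Polynomial.aeval_X]
    have hdeg : P.natDegree * F.natDegree = 1 := by
      have := congrArg Polynomial.natDegree hcomp
      rwa [Polynomial.natDegree_comp, Polynomial.natDegree_X] at this
    have hP1 : P.natDegree = 1 := Nat.eq_one_of_mul_eq_one_right hdeg
    have hF1 : F.natDegree = 1 := Nat.eq_one_of_mul_eq_one_left hdeg
    have hPexp := Polynomial.eq_X_add_C_of_natDegree_le_one hP1.le
    have hcomp' : (Polynomial.C (P.coeff 1) * Polynomial.X + Polynomial.C (P.coeff 0)).comp F
        = Polynomial.X := by rw [← hPexp]; exact hcomp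
    have hcoeff : P.coeff 1 * F.coeff 1 = 1 := by
      have h := congrArg (fun q => Polynomial.coeff q 1) hcomp'
      simpa [Polynomial.add_comp, Polynomial.mul_comp, Polynomial.coeff_C] using h
    have hFexp := Polynomial.eq_X_add_C_of_natDegree_le_one hF1.le
    have hfeq : f = ((F.coeff 1 : B) : MvPolynomial (Fin n) k) * X i
        + ((F.coeff 0 : B) : MvPolynomial (Fin n) k) := by
      rw [hFexp] at hF
      rw [← hF]
      rw [map_add,
        map_mul,
        Polynomial.aeval_X, Polynomial.aeval_C, Polynomial.aeval_C]
      rfl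
    have hunit : IsUnit ((F.coeff 1 : B) : MvPolynomial (Fin n) k) := by
      apply IsUnit.of_mul_eq_one ((P.coeff 1 : B) : MvPolynomial (Fin n) k)
      have h2 : ((F.coeff 1 * P.coeff 1 : B) : MvPolynomial (Fin n) k)
          = ((1 : B) : MvPolynomial (Fin n) k) := by
        rw [mul_comm, hcoeff]
      simpa using h2
    obtain ⟨a, ha⟩ := isUnit_eq_C k _ hunit
    exact ⟨a, ((F.coeff 0 : B) : MvPolynomial (Fin n) k), (F.coeff 0 : B).2,
      hfeq.trans (by rw [ha])⟩
  · intro h j hj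
    have fwd : (Asub k n j).map (φ : MvPolynomial (Fin n) k →ₐ[k] MvPolynomial (Fin n) k)
        ≤ Asub k n j := by
      rw [Asub, AlgHom.map_adjoin]
      apply Algebra.adjoin_le
      rintro _ ⟨P, ⟨m, hm, rfl⟩, rfl⟩
      obtain ⟨a, p, hp, hX⟩ := h m
      show φ (X m) ∈ Asub k n j
      rw [hX]
      refine add_mem (mul_mem ?_ (Algebra.subset_adjoin ⟨m, hm, rfl⟩))
        (Asub_mono k n (le_of_lt hm) hp)
      rw [← algebraMap_eq]
      exact Subalgebra.algebraMap_mem _ _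
    have bwd : ∀ j', Asub k n j'
        ≤ (Asub k n j').map (φ : MvPolynomial (Fin n) k →ₐ[k] MvPolynomial (Fin n) k) := by
      intro j'
      induction j' using Nat.strong_induction_on with
      | _ j' ih =>
        apply Algebra.adjoin_le
        rintro _ ⟨m, hm, rfl⟩
        obtain ⟨a, p, hp, hX⟩ := h m
        have hpm : p ∈ (Asub k n j').map
            (φ : MvPolynomial (Fin n) k →ₐ[k] MvPolynomial (Fin n) k) :=
          Subalgebra.map_mono (Asub_mono k n (le_of_lt hm)) (ih (m : ℕ) hm hp)
        have hXm : φ (X m) ∈ (Asub k n j').map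
            (φ : MvPolynomial (Fin n) k →ₐ[k] MvPolynomial (Fin n) k) :=
          ⟨X m, Algebra.subset_adjoin ⟨m, hm, rfl⟩, rfl⟩
        have hrw : (X m : MvPolynomial (Fin n) k)
            = C ((a : k)⁻¹) * (φ (X m) - p) := by
          rw [hX, add_sub_cancel_right, ← mul_assoc, ← C_mul,
            inv_mul_cancel₀ a.ne_zero, C_1, one_mul]
        rw [hrw]
        refine mul_mem ?_ (sub_mem hXm hpm)
        rw [← algebraMap_eq]
        exact Subalgebra.algebraMap_mem _ _
    exact le_antisymm fwd (bwd j)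

end
end

section
/- Let B be a Noetherian integrally closed integral domain with field of fractions F, and let A be a subring of F containing B. Assume that every prime ideal 𝔭 of B of height one is the contraction of a prime ideal of A, i.e., there exists a prime ideal 𝔮 of A with 𝔮 ∩ B = 𝔭. Then A = B. -/
/-!
Suppose `A ≠ B`. Since `B` is Noetherian, the nonzero `B`-module `A / B` has an associated prime
`𝔭 = (B :_B x)` with `x ∈ A`. If `x 𝔭 ⊆ 𝔭`, then `x` is integral over `B`, hence lies in `B`;
so there are `d ∈ 𝔭` and `c = x d ∉ 𝔭`. Every `y ∈ 𝔭` satisfies `c y = d (x y) ∈ d B`, which makes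
`𝔭` minimal over `d B`, so `𝔭` has height one by Krull's principal ideal theorem. A prime `𝔮` of
`A` over `𝔭` would contain `d`, hence `x d = c`, contradicting `c ∉ 𝔭`.
-/

theorem Submodule.exists_isPrime_colon_singleton {R M : Type*} [CommRing R] [IsNoetherianRing R]
    [AddCommGroup M] [Module R M] {N : Submodule R M} (hN : N ≠ ⊤) :
    ∃ x : M, (N.colon {x}).IsPrime := by
  have : Nontrivial (M ⧸ N) := Submodule.Quotient.nontrivial_iff.mpr hN
  obtain ⟨P, hP⟩ := associatedPrimes.nonempty R (M ⧸ N)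
  obtain ⟨hPprime, m, rfl⟩ := isAssociatedPrime_iff.mp hP
  obtain ⟨x, rfl⟩ := N.mkQ_surjective m
  refine ⟨x, ?_⟩
  convert hPprime using 1
  ext r
  simp [mem_colon_singleton, ← Submodule.Quotient.mk_smul]

theorem Submodule.dvd_mul_of_mem_colon_one_singleton {R S : Type*} [CommRing R] [CommRing S]
    [Algebra R S] [FaithfulSMul R S] {y : S} {c d e : R} (hcd : algebraMap R S c = d • y)
    (he : e ∈ (1 : Submodule R S).colon {y}) : d ∣ c * e := by
  obtain ⟨z, hz⟩ := Submodule.mem_one.mp (Submodule.mem_colon_singleton.mp he)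
  refine ⟨z, FaithfulSMul.algebraMap_injective R S ?_⟩
  simp only [map_mul, hz, hcd, Algebra.smul_def]
  ring

namespace Subalgebra

variable {R S : Type*} [CommRing R] [CommRing S] [Algebra R S] {A : Subalgebra R S}

theorem one_ne_top_of_ne_bot (hA : A ≠ ⊥) : (1 : Submodule R A) ≠ ⊤ := by
  contrapose! hA
  refine eq_bot_iff.mpr fun y hy ↦ ?_
  have hy1 : (⟨y, hy⟩ : A) ∈ (1 : Submodule R A) := hA ▸ Submodule.mem_top
  obtain ⟨r, hr⟩ := Submodule.mem_one.mp hy1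
  exact Algebra.mem_bot.mpr ⟨r, congrArg Subtype.val hr⟩

theorem colon_one_singleton (x : A) :
    (1 : Submodule R A).colon {x} = (1 : Submodule R S).colon {(x : S)} := by
  ext r
  simp only [Submodule.mem_colon_singleton, Submodule.mem_one, Subtype.ext_iff]
  rfl

end Subalgebra

theorem IsFractionRing.colon_one_singleton_ne_bot {R K : Type*} [CommRing R] [Nontrivial R]
    [CommRing K] [Algebra R K] [IsFractionRing R K] (y : K) :
    (1 : Submodule R K).colon {y} ≠ ⊥ := by
  obtain ⟨⟨a, s⟩, hs⟩ := IsLocalization.surj (nonZeroDivisors R) y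
  refine (Submodule.ne_bot_iff _).mpr ⟨s, ?_, nonZeroDivisors.coe_ne_zero s⟩
  rw [Submodule.mem_colon_singleton, Submodule.mem_one]
  exact ⟨a, by rw [Algebra.smul_def, mul_comm]; exact hs.symm⟩

theorem IsIntegrallyClosed.mem_one_of_forall_smul_mem {R K : Type*} [CommRing R]
    [IsIntegrallyClosed R] [Field K] [Algebra R K] [IsFractionRing R K] {I : Ideal R} (hI : I ≠ ⊥)
    (hfg : I.FG) {y : K} (hy : ∀ d ∈ I, ∃ c ∈ I, algebraMap R K c = d • y) :
    y ∈ (1 : Submodule R K) := by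
  have hint : IsIntegral R y := by
    refine isIntegral_of_smul_mem_submodule (Submodule.map (Algebra.linearMap R K) I) ?_
      (Submodule.FG.map _ hfg) y ?_
    · rwa [Ne, ← Submodule.map_bot (Algebra.linearMap R K),
        (Submodule.map_injective_of_injective (IsFractionRing.injective R K)).eq_iff]
    · rintro _ ⟨d, hd, rfl⟩
      obtain ⟨c, hc, hcd⟩ := hy d hd
      exact ⟨c, hc, by simp [hcd, Algebra.smul_def, mul_comm]⟩
  exact Submodule.mem_one.mpr (IsIntegrallyClosed.isIntegral_iff.mp hint)

theorem Ideal.mem_minimalPrimes_span_singleton_of_dvd_mul {R : Type*} [CommSemiring R]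
    {p : Ideal R} [p.IsPrime] {c d : R} (hd : d ∈ p) (hc : c ∉ p) (h : ∀ y ∈ p, d ∣ c * y) :
    p ∈ (Ideal.span {d}).minimalPrimes := by
  refine ⟨⟨‹_›, (Ideal.span_singleton_le_iff_mem p).mpr hd⟩, fun q ⟨hq, hdq⟩ hqp y hy ↦ ?_⟩
  have hcy : c * y ∈ q :=
    Ideal.mem_of_dvd _ (h y hy) ((Ideal.span_singleton_le_iff_mem q).mp hdq)
  exact (hq.mem_or_mem hcy).resolve_left fun hcq ↦ hc (hqp hcq)

theorem Ideal.height_eq_one_of_mem_minimalPrimes_span_singleton {R : Type*} [CommRing R]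
    [IsNoetherianRing R] {d : R} (hd : d ∈ nonZeroDivisors R) {p : Ideal R}
    (hp : p ∈ (Ideal.span {d}).minimalPrimes) : p.height = 1 :=
  le_antisymm (Ideal.height_le_one_of_isPrincipal_of_mem_minimalPrimes _ p hp)
    ((Ideal.one_le_height_span_singleton_of_mem_nonZeroDivisors hd).trans
      (Ideal.height_mono hp.1.2))

/-- **Igusa's lemma, ring-theoretic form.** Let `B` be a Noetherian integrally closed
domain with fraction field `F`, and let `A` be a subring of `F` containing `B` (modelled
as a `B`-subalgebra of `F`). If every height-one prime ideal `𝔭` of `B` is the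
contraction of a prime ideal of `A`, then `A = B`. -/
theorem subalgebra_eq_bot_of_height_one_primes_lift
    (B : Type*) [CommRing B] [IsDomain B] [IsNoetherianRing B] [IsIntegrallyClosed B]
    (A : Subalgebra B (FractionRing B))
    (h : ∀ p : PrimeSpectrum B, Order.height p = 1 →
      ∃ q : Ideal A, q.IsPrime ∧ q.comap (algebraMap B A) = p.asIdeal) :
    A = ⊥ := by
  by_contra hA
  obtain ⟨x, hp⟩ := Submodule.exists_isPrime_colon_singleton (Subalgebra.one_ne_top_of_ne_bot hA)
  rw [Subalgebra.colon_one_singleton] at hp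
  set p := (1 : Submodule B (FractionRing B)).colon {(x : FractionRing B)}
  obtain ⟨d, hd, c, hc, hcd⟩ :
      ∃ d ∈ p, ∃ c ∉ p, algebraMap B (FractionRing B) c = d • (x : FractionRing B) := by
    by_contra! hx
    refine hp.ne_top ((Submodule.colon_eq_top_iff_subset _).mpr (Set.singleton_subset_iff.mpr ?_))
    refine IsIntegrallyClosed.mem_one_of_forall_smul_mem
      (IsFractionRing.colon_one_singleton_ne_bot _) (IsNoetherian.noetherian p) fun d hd ↦ ?_
    obtain ⟨c, hcd⟩ := Submodule.mem_one.mp (Submodule.mem_colon_singleton.mp hd)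
    exact ⟨c, not_not.mp fun hc ↦ hx d hd c hc hcd, hcd⟩
  have hd0 : d ∈ nonZeroDivisors B := by
    refine mem_nonZeroDivisors_of_ne_zero fun hd0 ↦ hc ?_
    rw [hd0, zero_smul, ← map_zero (algebraMap B _)] at hcd
    exact IsFractionRing.injective B _ hcd ▸ p.zero_mem
  have hmin : p ∈ (Ideal.span {d}).minimalPrimes :=
    Ideal.mem_minimalPrimes_span_singleton_of_dvd_mul hd hc fun _ ↦
      Submodule.dvd_mul_of_mem_colon_one_singleton hcd
  obtain ⟨q, -, hq : q.comap (algebraMap B A) = p⟩ := h ⟨p, hp⟩ <| by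
    rw [← PrimeSpectrum.height_eq_orderHeight]
    exact Ideal.height_eq_one_of_mem_minimalPrimes_span_singleton hd0 hmin
  have hcdA : algebraMap B A c = algebraMap B A d * x :=
    Subtype.ext (by simpa [Algebra.smul_def] using hcd)
  have hcq : algebraMap B A c ∈ q := hcdA ▸ q.mul_mem_right _ (show d ∈ q.comap _ from hq ▸ hd)
  exact hc (hq ▸ hcq)
end

section
/- The group of A-translations of the variable of a polynomial ring coincides with its own centralizer: the centralizer of U = {σ_f : f ∈ A} in the group of k-algebra automorphisms of A[w] equals U. -/
/-!
An automorphism `σ` commuting with every translation `p ↦ p.comp (X + C f)` sends each constant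
to a translation-invariant polynomial, which is constant because `A` is infinite. Hence `σ` acts
on coefficients by a ring endomorphism `g` and is `p ↦ (p.map g).comp (σ X)`; surjectivity
forces `σ X = C b * X + C c`, and comparing `σ (X + C f)` with `(σ X).comp (X + C f)` gives
`g f = b * f`, so `b = g 1 = 1` and `σ` is the translation by `c`.
-/

open Polynomial

namespace Polynomial

section Translation

variable {R A : Type*} [CommSemiring R] [CommRing A] [Algebra R A]

variable (R) in
noncomputable def translation (f : A) : A[X] ≃ₐ[R] A[X] :=
  (algEquivAevalXAddC f).restrictScalars R

theorem translation_apply (f : A) (p : A[X]) : translation R f p = p.comp (X + C f) := by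
  simp [translation, comp_eq_aeval]

@[simp]
theorem translation_C (f a : A) : translation R f (C a) = C a := by
  simp [translation_apply]

@[simp]
theorem translation_X (f : A) : translation R f X = X + C f := by
  simp [translation_apply]

theorem eq_translation_iff {σ : A[X] ≃ₐ[R] A[X]} {f : A} :
    σ = translation R f ↔ (∀ a, σ (C a) = C a) ∧ σ X = X + C f := by
  refine ⟨by rintro rfl; simp, fun ⟨hC, hX⟩ => AlgEquiv.ext fun p => ?_⟩
  exact DFunLike.congr_fun (ringHom_ext (f := (σ : A[X] →+* A[X]))
    (g := (translation R f : A[X] →+* A[X])) (by simpa using hC) (by simpa using hX)) p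

theorem range_translation :
    Set.range (translation R (A := A)) =
      {σ | (∀ a, σ (C a) = C a) ∧ ∃ f, σ X = X + C f} := by
  ext σ
  simp only [Set.mem_range, Set.mem_ofPred_eq, eq_comm (b := σ), eq_translation_iff]
  exact ⟨fun ⟨f, hC, hX⟩ => ⟨hC, f, hX⟩, fun ⟨hC, f, hX⟩ => ⟨f, hC, hX⟩⟩

theorem translation_add (f g : A) :
    translation R (f + g) = translation R f * translation R g := by
  rw [eq_comm, eq_translation_iff]
  simp [add_assoc]

theorem commute_translation (f g : A) : Commute (translation R f) (translation R g) := by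
  rw [Commute, SemiconjBy, ← translation_add, ← translation_add, add_comm]

end Translation

theorem eq_C_of_forall_comp_X_add_C_eq {A : Type*} [CommRing A] [IsDomain A] [Infinite A]
    {p : A[X]} (h : ∀ f, p.comp (X + C f) = p) : p = C (p.eval 0) :=
  Polynomial.funext fun f => by simpa using congr_arg (eval 0) (h f)

theorem natDegree_eq_one_of_surjective_eval₂RingHom {A : Type*} [CommRing A] [IsDomain A]
    {g : A →+* A} {q : A[X]} (h : Function.Surjective (eval₂RingHom (C.comp g) q)) :
    q.natDegree = 1 := by
  obtain ⟨p, hp⟩ := h X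
  have hX : (p.map g).comp q = X := by simpa [comp, eval₂_map] using hp
  have := congr_arg natDegree hX
  rw [natDegree_comp, natDegree_X] at this
  exact Nat.eq_one_of_mul_eq_one_left this

section Centralizer

variable {R A : Type*} [CommSemiring R] [CommRing A] [IsDomain A] [Infinite A] [Algebra R A]

theorem exists_map_C_eq_of_forall_commute {σ : A[X] ≃ₐ[R] A[X]}
    (h : ∀ f, Commute σ (translation R f)) : ∃ g : A →+* A, ∀ a, σ (C a) = C (g a) := by
  refine ⟨constantCoeff.comp ((σ : A[X] →+* A[X]).comp C), fun a => ?_⟩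
  have hinv (f : A) : (σ (C a)).comp (X + C f) = σ (C a) := by
    rw [← translation_apply (R := R), ← AlgEquiv.mul_apply, ← (h f).eq, AlgEquiv.mul_apply,
      translation_C]
  simpa [coeff_zero_eq_eval_zero] using eq_C_of_forall_comp_X_add_C_eq hinv

theorem mem_range_translation_of_forall_commute {σ : A[X] ≃ₐ[R] A[X]}
    (h : ∀ f, Commute σ (translation R f)) : σ ∈ Set.range (translation R) := by
  obtain ⟨g, hg⟩ := exists_map_C_eq_of_forall_commute h
  have hσ : (σ : A[X] →+* A[X]) = eval₂RingHom (C.comp g) (σ X) :=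
    ringHom_ext (by simpa using hg) (by simp)
  have hdeg : (σ X).natDegree = 1 :=
    natDegree_eq_one_of_surjective_eval₂RingHom (by rw [← hσ]; exact σ.surjective)
  set b := (σ X).coeff 1
  set c := (σ X).coeff 0
  have hX : σ X = C b * X + C c := eq_X_add_C_of_natDegree_le_one hdeg.le
  have hg_mul (f : A) : g f = b * f := by
    have h2 := DFunLike.congr_fun (h f).eq X
    rw [AlgEquiv.mul_apply, AlgEquiv.mul_apply, translation_X, translation_apply, map_add, hg,
      hX] at h2
    simp only [add_comp, mul_comp, C_comp, X_comp] at h2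
    apply C_injective
    rw [C_mul]
    linear_combination h2
  have hb : b = 1 := by simpa using (hg_mul 1).symm
  refine ⟨c, (eq_translation_iff.mpr ⟨fun a => ?_, ?_⟩).symm⟩
  · rw [hg, hg_mul, hb, one_mul]
  · rw [hX, hb, C_1, one_mul]

theorem centralizer_range_translation :
    (Subgroup.centralizer (Set.range (translation R (A := A))) : Set (A[X] ≃ₐ[R] A[X])) =
      Set.range (translation R) := by
  ext σ
  refine ⟨fun hσ => ?_, ?_⟩
  · exact mem_range_translation_of_forall_commute fun f =>
      (Subgroup.mem_centralizer_iff.mp hσ _ ⟨f, rfl⟩).symm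
  · rintro ⟨f, rfl⟩
    refine Subgroup.mem_centralizer_iff.mpr ?_
    rintro _ ⟨g, rfl⟩
    exact (commute_translation g f).eq

end Centralizer

end Polynomial

/-- The group `U = {σ_f : f ∈ A}` of `A`-translations of the variable `w` of the
polynomial ring `A[w]` (the `k`-algebra automorphisms fixing `A` pointwise and sending
`w` to `w + f` for some `f ∈ A`) coincides with its own centralizer in the group of
`k`-algebra automorphisms of `A[w]`. -/
theorem translations_eq_centralizer
    (k : Type*) [Field k] [IsAlgClosed k]
    (A : Type*) [CommRing A] [IsDomain A] [Algebra k A] :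
    (Subgroup.centralizer
        {σ : Polynomial A ≃ₐ[k] Polynomial A |
          (∀ a : A, σ (C a) = C a) ∧ ∃ f : A, σ X = X + C f} :
      Set (Polynomial A ≃ₐ[k] Polynomial A))
    = {σ : Polynomial A ≃ₐ[k] Polynomial A |
        (∀ a : A, σ (C a) = C a) ∧ ∃ f : A, σ X = X + C f} := by
  have : Infinite A := Infinite.of_injective _ (algebraMap k A).injective
  rw [← range_translation]
  exact centralizer_range_translation
end

section
/- Let k be an algebraically closed field and R an integral domain which is a finitely generated k-algebra, equipped with a faithful algebraic action s ↦ σ_s of the additive group (k,+) by k-algebra automorphisms. Then there exist s, s̃ ∈ k and f ∈ R such that σ_s̃(σ_s(f) − f) ≠ σ_s(f) − f. -/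
/-!
Suppose every difference `σ_s f - f` were fixed by the whole action. Pick `F` with
`σ_1 F = F + c`, `c ≠ 0`, and write `σ_t F = F + d`. Invariance of `σ_1 (F²) - F²` and
`σ_1 (F³) - F³` under `σ_t` forces `c d (c + d) = 0` (in every characteristic), so the orbit
`t ↦ σ_t F` takes only the values `F` and `F - c`. Being polynomial in `t` over an infinite
field, it is then constant, whence `σ_1 F = σ_0 F = F`, a contradiction.
-/

open Finset Polynomial

theorem sum_pow_smul_eq_of_infinite_setOf {k V : Type*} [Field k] [AddCommGroup V] [Module k V]
    {n : ℕ} {g : ℕ → V} {w : V} (h : {t : k | ∑ i ∈ range n, t ^ i • g i = w}.Infinite) (t : k) :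
    ∑ i ∈ range n, t ^ i • g i = w := by
  rw [← sub_eq_zero, ← Module.forall_dual_apply_eq_zero_iff k]
  intro φ
  set p : k[X] := ∑ i ∈ range n, C (φ (g i)) * X ^ i
  have eval_p (s : k) : p.eval s = φ (∑ i ∈ range n, s ^ i • g i) := by
    simp only [p, eval_finsetSum, map_sum, eval_mul, eval_C, eval_pow, eval_X, map_smul,
      smul_eq_mul]
    exact sum_congr rfl fun i _ => mul_comm _ _
  have hp : p = C (φ w) := eq_of_infinite_eval_eq _ _ <| h.mono fun s (hs : _ = w) =>
    show _ = _ by rw [eval_p, hs, eval_C]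
  rw [map_sub, ← eval_p, hp, eval_C, sub_self]

theorem sum_pow_smul_eq_of_finite_range {k V : Type*} [Field k] [Infinite k] [AddCommGroup V]
    [Module k V] {n : ℕ} {g : ℕ → V}
    (h : (Set.range fun t : k => ∑ i ∈ range n, t ^ i • g i).Finite) (s t : k) :
    ∑ i ∈ range n, s ^ i • g i = ∑ i ∈ range n, t ^ i • g i := by
  have := h.to_subtype
  obtain ⟨w, hw⟩ := Finite.exists_infinite_fiber
    (Set.rangeFactorization fun t : k => ∑ i ∈ range n, t ^ i • g i)
  have hw' : {t : k | ∑ i ∈ range n, t ^ i • g i = w}.Infinite := by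
    rw [← Set.infinite_coe_iff]
    convert hw using 2
    ext t
    simp [Set.rangeFactorization, Subtype.ext_iff]
  rw [sum_pow_smul_eq_of_infinite_setOf hw', sum_pow_smul_eq_of_infinite_setOf hw']

theorem apply_eq_or_apply_eq_two_mul_sub_of_forall_apply_sub_eq {R M : Type*} [CommRing R]
    [IsDomain R] [FunLike M R R] [RingHomClass M R R] {σ τ : M}
    (hτ : ∀ f, τ (σ f - f) = σ f - f) {F : R} (hF : σ F ≠ F) :
    τ F = F ∨ τ F = 2 * F - σ F := by
  obtain ⟨c, hc⟩ : ∃ c, σ F = F + c := ⟨σ F - F, by ring⟩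
  obtain ⟨d, hd⟩ : ∃ d, τ F = F + d := ⟨τ F - F, by ring⟩
  have hc0 : c ≠ 0 := fun h => hF (by rw [hc, h, add_zero])
  have hτc : τ c = c := by simpa only [hc, add_sub_cancel_left] using hτ F
  have h2 := hτ (F ^ 2)
  have h3 := hτ (F ^ 3)
  simp only [map_sub, map_pow, map_add, hc, hd, hτc] at h2 h3
  have key : c * (d * (c + d)) = 0 := by
    linear_combination h3 + (-(3 : R) * F - d - c) * h2
  rcases (mul_eq_zero.mp key).resolve_left hc0 |> mul_eq_zero.mp with hd0 | hdc
  · left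
    rw [hd, hd0, add_zero]
  · right
    rw [hd, hc]
    linear_combination hdc

theorem exists_noninvariant_difference_general
    (k : Type*) [Field k] [IsAlgClosed k]
    (R : Type*) [CommRing R] [IsDomain R] [Algebra k R]
    (σ : k → (R ≃ₐ[k] R))
    (hzero : σ 0 = 1)
    (halg : ∀ f : R, ∃ (m : ℕ) (g : ℕ → R), ∀ s : k,
      σ s f = ∑ i ∈ Finset.range (m + 1), s ^ i • g i)
    (hfaithful : ∀ s : k, σ s = 1 → s = 0) :
    ∃ (s t : k) (f : R), σ t (σ s f - f) ≠ σ s f - f := by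
  by_contra! hinv
  obtain ⟨F, hF⟩ : ∃ F, σ 1 F ≠ F := by
    by_contra! h
    exact one_ne_zero (hfaithful 1 (AlgEquiv.ext h))
  obtain ⟨m, g, hg⟩ := halg F
  have hfin : (Set.range fun t : k => ∑ i ∈ range (m + 1), t ^ i • g i).Finite := by
    refine (Set.toFinite {F, 2 * F - σ 1 F}).subset ?_
    rintro _ ⟨t, rfl⟩
    simp only [← hg t]
    exact apply_eq_or_apply_eq_two_mul_sub_of_forall_apply_sub_eq (hinv 1 t) hF
  apply hF
  rw [hg 1, sum_pow_smul_eq_of_finite_range hfin 1 0, ← hg 0, hzero, AlgEquiv.one_apply]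

/-- A faithful algebraic action of the additive group `(k,+)` on the coordinate ring `R`
of an irreducible affine variety admits `s, t ∈ k` and `f ∈ R` with
`σ_t (σ_s f - f) ≠ σ_s f - f`. -/
theorem exists_noninvariant_difference
    (k : Type*) [Field k] [IsAlgClosed k]
    (R : Type*) [CommRing R] [IsDomain R] [Algebra k R] [Algebra.FiniteType k R]
    (σ : k → (R ≃ₐ[k] R))
    (hzero : σ 0 = 1)
    (hadd : ∀ s t : k, σ (s + t) = σ s * σ t)
    (halg : ∀ f : R, ∃ (m : ℕ) (g : ℕ → R), ∀ s : k,
      σ s f = ∑ i ∈ Finset.range (m + 1), s ^ i • g i)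
    (hfaithful : ∀ s : k, σ s = 1 → s = 0) :
    ∃ (s t : k) (f : R), σ t (σ s f - f) ≠ σ s f - f :=
  exists_noninvariant_difference_general k R σ hzero halg hfaithful
end

section
/- Let p be a prime, k an algebraically closed field of characteristic p, and W a nonzero 𝔽_p-linear subspace of k such that the quotient group k/W is countable. Then there exists a sequence (q_n)_{n≥1} of additive polynomial maps q_n : kⁿ → k such that, setting U_1 = {0} ⊆ k and U_{n+1} = {(x, q_n(x)) : x ∈ kⁿ} ⊆ kⁿ⁺¹ (the graph of q_n), one has U_n × {0} ⊆ U_{n+1} for every n ≥ 1, and the 𝔽_p-subspace U = ⋃_n U_n of the direct sum ⊕_{m≥1} k (with kⁿ embedded as the first n coordinates) is a direct complement of W embedded in the first coordinate: U ⊕ W̃ = ⊕_{m≥1} k, where W̃ = {(w,0,0,…) : w ∈ W}. -/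
/-- A map `q : kⁿ → k` is an additive polynomial map in characteristic `p` if it is
given by a formula `q x = Σ_{i,j} c i j * (x i)^(p^j)`. -/
def IsAdditivePolyMap (p : ℕ) {k : Type*} [Field k] {n : ℕ} (q : (Fin n → k) → k) : Prop :=
  ∃ (N : ℕ) (c : Fin n → Fin N → k),
    ∀ x : Fin n → k, q x = ∑ i : Fin n, ∑ j : Fin N, c i j * x i ^ p ^ (j : ℕ)

/-- The embedding of `kⁿ` into the direct sum `⊕_{m} k` (finitely supported sequences)
as the first `n` coordinates. -/
noncomputable def embedFin {k : Type*} [Field k] (n : ℕ) (x : Fin n → k) : ℕ →₀ k :=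
  ∑ i : Fin n, Finsupp.single (i : ℕ) (x i)

section APLemmas

variable {p : ℕ} {k : Type*} [Field k]

lemma ap_iff {n : ℕ} (q : (Fin n → k) → k) :
    IsAdditivePolyMap p q ↔ ∃ (N : ℕ) (c : Fin n → ℕ → k),
      ∀ x, q x = ∑ i : Fin n, ∑ j ∈ Finset.range N, c i j * x i ^ p ^ j := by
  constructor
  · rintro ⟨N, c, hc⟩
    refine ⟨N, fun i j => if h : j < N then c i ⟨j, h⟩ else 0, fun x => ?_⟩
    rw [hc]
    refine Finset.sum_congr rfl fun i _ => ?_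
    rw [Finset.sum_range fun j => _]
    exact Finset.sum_congr rfl fun j _ => by simp
  · rintro ⟨N, c, hc⟩
    refine ⟨N, fun i j => c i j, fun x => ?_⟩
    rw [hc]
    refine Finset.sum_congr rfl fun i _ => ?_
    rw [Finset.sum_range fun j => _]

lemma ap_ext {n : ℕ} {q q' : (Fin n → k) → k} (h : IsAdditivePolyMap p q)
    (hqq : ∀ x, q x = q' x) : IsAdditivePolyMap p q' := by
  obtain ⟨N, c, hc⟩ := h
  exact ⟨N, c, fun x => (hqq x).symm.trans (hc x)⟩

lemma ap_pad {N N' : ℕ} (hN : N ≤ N') (d : ℕ → k) (g : ℕ → k) :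
    (∑ j ∈ Finset.range N, d j * g j)
      = ∑ j ∈ Finset.range N', (if j < N then d j else 0) * g j := by
  rw [← Finset.sum_subset (Finset.range_subset_range.2 hN)
    (fun j _ hj => by
      rw [if_neg (fun h => hj (Finset.mem_range.2 h)), zero_mul])]
  exact Finset.sum_congr rfl fun j hj => by rw [if_pos (Finset.mem_range.1 hj)]

lemma ap_add {n : ℕ} {f g : (Fin n → k) → k} (hf : IsAdditivePolyMap p f)
    (hg : IsAdditivePolyMap p g) : IsAdditivePolyMap p (fun x => f x + g x) := by
  rw [ap_iff] at *
  obtain ⟨N₁, c₁, h₁⟩ := hf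
  obtain ⟨N₂, c₂, h₂⟩ := hg
  refine ⟨max N₁ N₂, fun i j => (if j < N₁ then c₁ i j else 0) + (if j < N₂ then c₂ i j else 0),
    fun x => ?_⟩
  rw [h₁, h₂, ← Finset.sum_add_distrib]
  refine Finset.sum_congr rfl fun i _ => ?_
  rw [ap_pad (le_max_left N₁ N₂) (c₁ i) (fun j => x i ^ p ^ j),
    ap_pad (le_max_right N₁ N₂) (c₂ i) (fun j => x i ^ p ^ j), ← Finset.sum_add_distrib]
  refine Finset.sum_congr rfl fun j _ => ?_
  ring

lemma ap_comb (hp : p.Prime) [CharP k p] {n : ℕ} {f : (Fin n → k) → k}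
    (hf : IsAdditivePolyMap p f) (a b : k) :
    IsAdditivePolyMap p (fun x => a * f x + b * f x ^ p) := by
  haveI : Fact p.Prime := ⟨hp⟩
  rw [ap_iff] at *
  obtain ⟨N, c, hc⟩ := hf
  refine ⟨N + 1, fun i j => a * (if j < N then c i j else 0)
      + (if h : j = 0 then 0 else b * (if j - 1 < N then c i (j - 1) else 0) ^ p), fun x => ?_⟩
  have hfp : f x ^ p = ∑ i : Fin n, ∑ j ∈ Finset.range N, (c i j) ^ p * x i ^ p ^ (j + 1) := by
    rw [hc, sum_pow_char]
    refine Finset.sum_congr rfl fun i _ => ?_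
    rw [sum_pow_char]
    refine Finset.sum_congr rfl fun j _ => ?_
    rw [mul_pow, ← pow_mul, ← pow_succ]
  rw [hfp, hc, Finset.mul_sum, Finset.mul_sum, ← Finset.sum_add_distrib]
  refine Finset.sum_congr rfl fun i _ => ?_
  rw [Finset.mul_sum, Finset.mul_sum]
  simp only [add_mul]
  rw [Finset.sum_add_distrib]
  congr 1
  · simp_rw [← mul_assoc]
    rw [ap_pad (Nat.le_succ N) (fun j => a * c i j) (fun j => x i ^ p ^ j)]
    refine Finset.sum_congr rfl fun j _ => ?_
    split_ifs with h
    · ring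
    · simp
  · rw [Finset.sum_range_succ']
    have h0 : ((if h : (0:ℕ) = 0 then (0:k)
        else b * (if 0 - 1 < N then c i (0-1) else 0) ^ p)) * x i ^ p ^ 0 = 0 := by simp
    rw [h0, add_zero]
    refine Finset.sum_congr rfl fun j hj => ?_
    rw [dif_neg (Nat.succ_ne_zero j)]
    simp only [Nat.add_sub_cancel]
    rw [if_pos (Finset.mem_range.1 hj)]
    ring

end APLemmas

section APLemmas2

variable {p : ℕ} {k : Type*} [Field k]

lemma ap_last {n : ℕ} : IsAdditivePolyMap p (fun x : Fin (n+1) → k => x (Fin.last n)) := by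
  refine ⟨1, fun i _ => if i = Fin.last n then 1 else 0, fun x => ?_⟩
  simp [Fin.sum_univ_succ]  -- maybe not; try direct

lemma ap_init {n : ℕ} {f : (Fin n → k) → k} (hf : IsAdditivePolyMap p f) :
    IsAdditivePolyMap p (fun x : Fin (n+1) → k => f (Fin.init x)) := by
  obtain ⟨N, c, hc⟩ := hf
  refine ⟨N, fun i j => if h : (i : ℕ) < n then c ⟨i, h⟩ j else 0, fun x => ?_⟩
  show f (Fin.init x) = _
  rw [hc, Fin.sum_univ_castSucc]
  have hlast : ∑ j : Fin N,
      (if h : ((Fin.last n : Fin (n+1)) : ℕ) < n then c ⟨_, h⟩ j else 0) * x (Fin.last n) ^ p ^ (j:ℕ) = 0 := by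
    simp
  rw [hlast, add_zero]
  refine Finset.sum_congr rfl fun i _ => Finset.sum_congr rfl fun j _ => ?_
  have h1 : ((i.castSucc : Fin (n+1)) : ℕ) < n := i.isLt
  show _ = (if h : ((i.castSucc : Fin (n+1)) : ℕ) < n then c ⟨_, h⟩ j else 0) * _
  rw [dif_pos h1]
  have h2 : (⟨((i.castSucc : Fin (n+1)) : ℕ), h1⟩ : Fin n) = i := by ext; simp
  rw [h2]
  rfl

lemma ap_zero {n : ℕ} : IsAdditivePolyMap p (fun _ : Fin n → k => (0:k)) :=
  ⟨0, fun _ j => Fin.elim0 j, fun x => by simp⟩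

end APLemmas2

noncomputable section Construction

variable {k : Type*} [Field k]

open Classical in
/-- coefficient choice for the next step -/
def bcoef (p : ℕ) (W : AddSubgroup k) (Ψ : k → k) (c : k) : k :=
  if ∃ w ∈ W, Ψ (c - w) = 0 then 0 else (Ψ c) ^ (p - 1)

/-- composite of the first `ℓ` step maps -/
def Scomp (p : ℕ) (W : AddSubgroup k) (r : ℕ → k) : ℕ → k → k
  | 0 => fun y => y
  | (ℓ+1) => fun y => (Scomp p W r ℓ y) ^ p - bcoef p W (Scomp p W r ℓ) (r ℓ) * Scomp p W r ℓ y

/-- the coefficient used at stage `ℓ` -/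
def bb (p : ℕ) (W : AddSubgroup k) (r : ℕ → k) (ℓ : ℕ) : k :=
  bcoef p W (Scomp p W r ℓ) (r ℓ)

/-- composite of the step maps from stage `a` to stage `a + m` -/
def Tcomp (p : ℕ) (W : AddSubgroup k) (r : ℕ → k) (a : ℕ) : ℕ → k → k
  | 0 => fun y => y
  | (m+1) => fun y => (Tcomp p W r a m y) ^ p - bb p W r (a + m) * Tcomp p W r a m y

/-- the functionals whose kernels are the `U n` -/
def Phi (p : ℕ) (W : AddSubgroup k) (r : ℕ → k) : (ℓ : ℕ) → (Fin (ℓ+1) → k) → k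
  | 0 => fun x => x 0
  | (ℓ+1) => fun x => x (Fin.last (ℓ+1)) +
      ((Phi p W r ℓ (Fin.init x)) ^ p - bb p W r ℓ * Phi p W r ℓ (Fin.init x))

/-- the additive polynomial maps -/
def qmap (p : ℕ) (W : AddSubgroup k) (r : ℕ → k) : (n : ℕ) → (Fin n → k) → k
  | 0 => fun _ => 0
  | (n+1) => fun x => bb p W r n * Phi p W r n x - (Phi p W r n x) ^ p

variable (p : ℕ) (W : AddSubgroup k) (r : ℕ → k)

lemma Scomp_succ (ℓ : ℕ) (y : k) :
    Scomp p W r (ℓ+1) y = (Scomp p W r ℓ y) ^ p - bb p W r ℓ * Scomp p W r ℓ y := rfl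

lemma Phi_succ (ℓ : ℕ) (x : Fin (ℓ+2) → k) :
    Phi p W r (ℓ+1) x = x (Fin.last (ℓ+1)) +
      ((Phi p W r ℓ (Fin.init x)) ^ p - bb p W r ℓ * Phi p W r ℓ (Fin.init x)) := rfl

variable {p}

lemma Scomp_zeroval (hp : p.Prime) (ℓ : ℕ) : Scomp p W r ℓ 0 = 0 := by
  induction ℓ with
  | zero => rfl
  | succ ℓ ih => rw [Scomp_succ, ih, zero_pow hp.ne_zero, mul_zero, sub_zero]

lemma Tcomp_zeroval (hp : p.Prime) (a m : ℕ) : Tcomp p W r a m 0 = 0 := by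
  induction m with
  | zero => rfl
  | succ m ih => show (Tcomp p W r a m 0) ^ p - _ * Tcomp p W r a m 0 = 0
                 rw [ih, zero_pow hp.ne_zero, mul_zero, sub_zero]

lemma Scomp_add (hp : p.Prime) [CharP k p] (ℓ : ℕ) (x y : k) :
    Scomp p W r ℓ (x + y) = Scomp p W r ℓ x + Scomp p W r ℓ y := by
  haveI : Fact p.Prime := ⟨hp⟩
  induction ℓ with
  | zero => rfl
  | succ ℓ ih => rw [Scomp_succ, Scomp_succ, Scomp_succ, ih, add_pow_char]; ring

lemma Scomp_sub (hp : p.Prime) [CharP k p] (ℓ : ℕ) (x y : k) :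
    Scomp p W r ℓ (x - y) = Scomp p W r ℓ x - Scomp p W r ℓ y := by
  haveI : Fact p.Prime := ⟨hp⟩
  induction ℓ with
  | zero => rfl
  | succ ℓ ih => rw [Scomp_succ, Scomp_succ, Scomp_succ, ih, sub_pow_char]; ring

lemma Scomp_nsmul (hp : p.Prime) [CharP k p] (ℓ : ℕ) (m : ℕ) (x : k) :
    Scomp p W r ℓ (m • x) = m • Scomp p W r ℓ x := by
  induction m with
  | zero => simpa using Scomp_zeroval W r hp ℓ
  | succ m ih => rw [succ_nsmul, succ_nsmul, Scomp_add W r hp, ih]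

lemma Scomp_eq_Tcomp (hp : p.Prime) {a n : ℕ} (h : a ≤ n) (y : k) :
    Scomp p W r n y = Tcomp p W r a (n - a) (Scomp p W r a y) := by
  induction n with
  | zero =>
    have : a = 0 := Nat.le_zero.mp h
    subst this; rfl
  | succ n ih =>
    rcases Nat.lt_or_ge a (n+1) with hlt | hge
    · have ha : a ≤ n := Nat.lt_succ_iff.mp hlt
      rw [Scomp_succ, ih ha, show n + 1 - a = (n - a) + 1 by omega]
      show _ = (Tcomp p W r a (n-a) _) ^ p - bb p W r (a + (n - a)) * _
      rw [show a + (n - a) = n by omega]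
    · have : a = n + 1 := le_antisymm h hge
      subst this
      rw [Nat.sub_self]
      rfl

lemma Phi_sub (hp : p.Prime) [CharP k p] (ℓ : ℕ) (x y : Fin (ℓ+1) → k) :
    Phi p W r ℓ (x - y) = Phi p W r ℓ x - Phi p W r ℓ y := by
  haveI : Fact p.Prime := ⟨hp⟩
  induction ℓ with
  | zero => rfl
  | succ ℓ ih =>
    have hinit : Fin.init (x - y) = Fin.init x - Fin.init y := rfl
    rw [Phi_succ, Phi_succ, Phi_succ, hinit, ih, sub_pow_char, Pi.sub_apply]
    ring

lemma Phi_pad (hp : p.Prime) {ℓ : ℕ} : ∀ {n : ℕ} (h : ℓ ≤ n) (x : Fin (n+1) → k),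
    (∀ i : Fin (n+1), ℓ + 1 ≤ (i : ℕ) → x i = 0) →
    Phi p W r n x = Tcomp p W r ℓ (n - ℓ)
      (Phi p W r ℓ (fun i => x (Fin.castLE (by omega) i))) := by
  intro n
  induction n with
  | zero =>
    intro h x hx
    have hℓ : ℓ = 0 := Nat.le_zero.mp h
    subst hℓ
    exact congrArg (Phi p W r 0) (funext fun i => (congrArg x (Fin.ext rfl)).symm)
  | succ n ih =>
    intro h x hx
    rcases Nat.lt_or_ge ℓ (n+1) with hlt | hge
    · have hℓn : ℓ ≤ n := Nat.lt_succ_iff.mp hlt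
      have hlast : x (Fin.last (n+1)) = 0 := hx _ (by simp; omega)
      have hxin : ∀ i : Fin (n+1), ℓ + 1 ≤ (i : ℕ) → Fin.init x i = 0 := by
        intro i hi
        exact hx _ (by simpa using hi)
      rw [Phi_succ, hlast, ih hℓn (Fin.init x) hxin,
        show n + 1 - ℓ = (n - ℓ) + 1 by omega]
      have hres : (fun i => Fin.init x (Fin.castLE (by omega : ℓ + 1 ≤ n + 1) i))
          = (fun i : Fin (ℓ+1) => x (Fin.castLE (by omega : ℓ + 1 ≤ n + 2) i)) := by
        funext i
        exact congrArg x (Fin.ext rfl)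
      rw [hres]
      show _ = (Tcomp p W r ℓ (n - ℓ) _) ^ p - bb p W r (ℓ + (n - ℓ)) * _
      rw [show ℓ + (n - ℓ) = n by omega]
      ring
    · have : ℓ = n + 1 := le_antisymm h hge
      subst this
      rw [Nat.sub_self]
      exact congrArg (Phi p W r (n+1)) (funext fun i => (congrArg x (Fin.ext rfl)).symm)

lemma step_surjective [IsAlgClosed k] (hp : p.Prime) (b d : k) :
    ∃ y : k, y ^ p - b * y = d := by
  set f : Polynomial k := Polynomial.X ^ p - (Polynomial.C b * Polynomial.X + Polynomial.C d)
    with hf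
  have hlow : (Polynomial.C b * Polynomial.X + Polynomial.C d).degree
      < ((Polynomial.X : Polynomial k) ^ p).degree := by
    rw [Polynomial.degree_X_pow]
    refine lt_of_le_of_lt (Polynomial.degree_add_le _ _) ?_
    rw [max_lt_iff]
    constructor
    · refine lt_of_le_of_lt (Polynomial.degree_mul_le _ _) ?_
      refine lt_of_le_of_lt (add_le_add Polynomial.degree_C_le le_rfl) ?_
      rw [Polynomial.degree_X, zero_add]
      exact_mod_cast hp.one_lt
    · refine lt_of_le_of_lt Polynomial.degree_C_le ?_
      exact_mod_cast hp.pos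
  have hdeg : f.degree = p := by
    rw [hf, Polynomial.degree_sub_eq_left_of_degree_lt hlow, Polynomial.degree_X_pow]
  have hne : f.degree ≠ 0 := by
    rw [hdeg]
    exact_mod_cast hp.ne_zero
  obtain ⟨y, hy⟩ := IsAlgClosed.exists_root f hne
  refine ⟨y, ?_⟩
  have h0 : y ^ p - (b * y + d) = 0 := by
    simpa [hf, Polynomial.IsRoot] using hy
  linear_combination h0

lemma Scomp_surjective [IsAlgClosed k] (hp : p.Prime) (ℓ : ℕ) :
    Function.Surjective (Scomp p W r ℓ) := by
  induction ℓ with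
  | zero => exact fun d => ⟨d, rfl⟩
  | succ ℓ ih =>
    intro d
    obtain ⟨y, hy⟩ := step_surjective hp (bb p W r ℓ) d
    obtain ⟨z, hz⟩ := ih y
    exact ⟨z, by rw [Scomp_succ, hz, hy]⟩

lemma eq_natCast_of_pow_eq (hp : p.Prime) [CharP k p] {u : k} (h : u ^ p = u) :
    ∃ i : ℕ, i < p ∧ u = (i : k) := by
  haveI : Fact p.Prime := ⟨hp⟩
  classical
  set f : Polynomial k := Polynomial.X ^ p - Polynomial.X with hf
  have hlow : (Polynomial.X : Polynomial k).degree
      < ((Polynomial.X : Polynomial k) ^ p).degree := by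
    rw [Polynomial.degree_X_pow, Polynomial.degree_X]
    exact_mod_cast hp.one_lt
  have hdeg : f.degree = p := by
    rw [hf, Polynomial.degree_sub_eq_left_of_degree_lt hlow, Polynomial.degree_X_pow]
  have hfne : f ≠ 0 := fun h0 => by
    rw [h0, Polynomial.degree_zero] at hdeg
    exact absurd hdeg.symm (by simp)
  have hnat : f.natDegree = p := Polynomial.natDegree_eq_of_degree_eq_some hdeg
  have hroot : ∀ i : ℕ, i < p → f.IsRoot (i : k) := by
    intro i _
    have : ((i : k)) ^ p = (i : k) := by
      have hz : ((i : ZMod p)) ^ p = (i : ZMod p) := ZMod.pow_card _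
      have : ((i ^ p : ℕ) : ZMod p) = ((i : ℕ) : ZMod p) := by push_cast; exact hz
      have hmod : i ^ p ≡ i [MOD p] := (ZMod.natCast_eq_natCast_iff _ _ _).mp this
      have : ((i ^ p : ℕ) : k) = ((i : ℕ) : k) := (CharP.natCast_eq_natCast k p).mpr hmod
      push_cast at this
      exact this
    simp [hf, Polynomial.IsRoot, this]
  have huroot : f.IsRoot u := by simp [hf, Polynomial.IsRoot, h]
  -- the finset of casts of 0..p-1 together with u
  by_contra hcon
  push_neg at hcon
  have hunotin : u ∉ (Finset.range p).image (fun i : ℕ => (i : k)) := by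
    intro hu
    obtain ⟨i, hi, hiu⟩ := Finset.mem_image.mp hu
    exact (hcon i (Finset.mem_range.mp hi)) hiu.symm
  have hsub : insert u ((Finset.range p).image (fun i : ℕ => (i : k))) ⊆ f.roots.toFinset := by
    intro a ha
    rw [Multiset.mem_toFinset, Polynomial.mem_roots hfne]
    rcases Finset.mem_insert.mp ha with rfl | ha
    · exact huroot
    · obtain ⟨i, hi, rfl⟩ := Finset.mem_image.mp ha
      exact hroot i (Finset.mem_range.mp hi)
  have hcard1 : (insert u ((Finset.range p).image (fun i : ℕ => (i : k)))).card = p + 1 := by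
    rw [Finset.card_insert_of_notMem hunotin, Finset.card_image_of_injOn, Finset.card_range]
    intro a ha b hb hab
    have : a ≡ b [MOD p] := (CharP.natCast_eq_natCast k p).mp hab
    have := Nat.ModEq.eq_of_lt_of_lt this (Finset.mem_coe.mp ha |> Finset.mem_range.mp)
      (Finset.mem_coe.mp hb |> Finset.mem_range.mp)
    exact this
  have : p + 1 ≤ p := by
    calc p + 1 = _ := hcard1.symm
      _ ≤ f.roots.toFinset.card := Finset.card_le_card hsub
      _ ≤ Multiset.card f.roots := f.roots.toFinset_card_le
      _ ≤ f.natDegree := f.card_roots'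
      _ = p := hnat
  omega

lemma Scomp_neg (hp : p.Prime) [CharP k p] (ℓ : ℕ) (x : k) :
    Scomp p W r ℓ (-x) = - Scomp p W r ℓ x := by
  have := Scomp_sub W r hp ℓ 0 x
  rw [zero_sub, Scomp_zeroval W r hp, zero_sub] at this
  exact this

lemma Scomp_injW (hp : p.Prime) [CharP k p] (ℓ : ℕ) :
    ∀ w ∈ W, Scomp p W r ℓ w = 0 → w = 0 := by
  haveI : Fact p.Prime := ⟨hp⟩
  induction ℓ with
  | zero => exact fun w _ h => h
  | succ ℓ ih =>
    intro w hw h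
    rw [Scomp_succ] at h
    set y := Scomp p W r ℓ w with hy
    by_cases hP : ∃ w' ∈ W, Scomp p W r ℓ (r ℓ - w') = 0
    · have hb : bb p W r ℓ = 0 := by
        rw [bb, bcoef, if_pos hP]
      rw [hb, zero_mul, sub_zero, pow_eq_zero_iff hp.ne_zero] at h
      exact ih w hw h
    · have hb : bb p W r ℓ = (Scomp p W r ℓ (r ℓ)) ^ (p - 1) := by
        rw [bb, bcoef, if_neg hP]
      set t := Scomp p W r ℓ (r ℓ) with htdef
      have ht : t ≠ 0 := by
        intro h0
        exact hP ⟨0, W.zero_mem, by rw [sub_zero, ← htdef]; exact h0⟩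
      rw [hb] at h
      have heq : y ^ p = t ^ (p - 1) * y := by linear_combination h
      have htp : t ^ p = t ^ (p - 1) * t := by
        conv_lhs => rw [show p = (p-1)+1 from by have := hp.pos; omega]
        rw [pow_succ]
      have hup : (y * t⁻¹) ^ p = y * t⁻¹ := by
        rw [mul_pow, heq, inv_pow]
        field_simp
        rw [htp]
        ring
      obtain ⟨i, hip, hui⟩ := eq_natCast_of_pow_eq hp hup
      have hyit : y = (i : k) * t := by
        have : y * t⁻¹ * t = (i : k) * t := by rw [hui]
        rwa [inv_mul_cancel_right₀ ht] at this
      rcases Nat.eq_zero_or_pos i with rfl | hipos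
      · rw [Nat.cast_zero, zero_mul] at hyit
        exact ih w hw hyit
      · exfalso
        -- find the inverse of i mod p
        have hii : ((i : ZMod p)) ≠ 0 := by
          rw [Ne, ZMod.natCast_eq_zero_iff]
          intro hdvd
          exact absurd (Nat.le_of_dvd hipos hdvd) (by omega)
        set j := ((i : ZMod p)⁻¹).val with hjdef
        have hji : ((j * i : ℕ) : ZMod p) = 1 := by
          push_cast
          rw [hjdef, ZMod.natCast_zmod_val]
          exact inv_mul_cancel₀ hii
        have hmod : j * i ≡ 1 [MOD p] := by
          rw [← ZMod.natCast_eq_natCast_iff]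
          simpa using hji
        obtain ⟨m, hm⟩ : ∃ m, j * i = p * m + 1 := by
          refine ⟨j * i / p, ?_⟩
          have h1 : (j * i) % p = 1 := by
            have := hmod
            unfold Nat.ModEq at this
            rwa [Nat.mod_eq_of_lt hp.one_lt] at this
          have h2 := Nat.div_add_mod (j * i) p
          omega
        -- Scomp ℓ (w - i • r ℓ) = 0
        have h1 : Scomp p W r ℓ (w - i • r ℓ) = 0 := by
          rw [Scomp_sub W r hp, Scomp_nsmul W r hp, ← hy, ← htdef, hyit, nsmul_eq_mul, sub_self]
        have h2 : Scomp p W r ℓ (j • (w - i • r ℓ)) = 0 := by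
          rw [Scomp_nsmul W r hp, h1, smul_zero]
        have h3 : j • (w - i • r ℓ) = j • w - r ℓ := by
          rw [smul_sub, smul_smul, hm]
          congr 1
          rw [add_smul, one_smul, ← smul_smul, nsmul_eq_mul p, CharP.cast_eq_zero k p,
            zero_mul, zero_add]
        have h4 : Scomp p W r ℓ (r ℓ - j • w) = 0 := by
          rw [← neg_sub, Scomp_neg W r hp, ← h3, h2, neg_zero]
        exact hP ⟨j • w, W.nsmul_mem hw j, h4⟩

lemma Scomp_cover (hp : p.Prime) [CharP k p]
    (hr : ∀ c : k, ∃ ℓ, c - r ℓ ∈ W) (c : k) :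
    ∃ ℓ, ∃ w ∈ W, Scomp p W r ℓ (c - w) = 0 := by
  obtain ⟨ℓ, hw0⟩ := hr c
  by_cases hP : ∃ w' ∈ W, Scomp p W r ℓ (r ℓ - w') = 0
  · obtain ⟨w', hw', h0⟩ := hP
    refine ⟨ℓ, w' + (c - r ℓ), W.add_mem hw' hw0, ?_⟩
    rw [show c - (w' + (c - r ℓ)) = r ℓ - w' by ring]
    exact h0
  · refine ⟨ℓ + 1, c - r ℓ, hw0, ?_⟩
    rw [show c - (c - r ℓ) = r ℓ by ring, Scomp_succ]
    have hb : bb p W r ℓ = (Scomp p W r ℓ (r ℓ)) ^ (p - 1) := by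
      rw [bb, bcoef, if_neg hP]
    rw [hb, ← pow_succ, show p - 1 + 1 = p from by have := hp.pos; omega, sub_self]

lemma Phi_ap (hp : p.Prime) [CharP k p] (ℓ : ℕ) : IsAdditivePolyMap p (Phi p W r ℓ) := by
  induction ℓ with
  | zero =>
    exact ap_ext ap_last (fun x => congrArg x (Fin.ext rfl))
  | succ ℓ ih =>
    have h1 : IsAdditivePolyMap p (fun x : Fin (ℓ+2) → k => Phi p W r ℓ (Fin.init x)) :=
      ap_init ih
    have h2 := ap_comb hp h1 (-(bb p W r ℓ)) 1
    have h3 := ap_add (ap_last (n := ℓ+1)) h2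
    refine ap_ext h3 (fun x => ?_)
    rw [Phi_succ]
    ring

lemma qmap_ap (hp : p.Prime) [CharP k p] (ℓ : ℕ) :
    IsAdditivePolyMap p (qmap p W r (ℓ+1)) := by
  have h := ap_comb hp (Phi_ap W r hp ℓ) (bb p W r ℓ) (-1)
  refine ap_ext h (fun x => ?_)
  show _ = bb p W r ℓ * Phi p W r ℓ x - (Phi p W r ℓ x) ^ p
  ring

lemma Phi_e0 (hp : p.Prime) (ℓ : ℕ) (w : k) :
    Phi p W r ℓ (fun i : Fin (ℓ+1) => if (i:ℕ) = 0 then w else 0) = Scomp p W r ℓ w := by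
  rw [Phi_pad W r hp (Nat.zero_le ℓ) _ (fun i hi => by
    rw [if_neg]; omega)]
  have h0 : Phi p W r 0 (fun i : Fin 1 =>
      (fun i : Fin (ℓ+1) => if (i:ℕ) = 0 then w else 0) (Fin.castLE (by omega) i)) = w := by
    show (if ((Fin.castLE (by omega : 1 ≤ ℓ+1) (0 : Fin 1) : Fin (ℓ+1)) : ℕ) = 0 then w else 0) = w
    norm_num
  rw [h0, Nat.sub_zero]
  exact (Scomp_eq_Tcomp W r hp (Nat.zero_le ℓ) w).symm

end Construction

section Embed

variable {k : Type*} [Field k]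

lemma embedFin_apply (n : ℕ) (x : Fin n → k) (j : ℕ) :
    embedFin n x j = if h : j < n then x ⟨j, h⟩ else 0 := by
  classical
  rw [embedFin, Finsupp.finset_sum_apply]
  by_cases h : j < n
  · rw [dif_pos h]
    rw [Finset.sum_eq_single (⟨j, h⟩ : Fin n)]
    · rw [Finsupp.single_apply, if_pos rfl]
    · intro i _ hne
      rw [Finsupp.single_apply, if_neg (fun he => hne (Fin.ext he))]
    · intro habs
      exact absurd (Finset.mem_univ _) habs
  · rw [dif_neg h]
    refine Finset.sum_eq_zero fun i _ => ?_
    rw [Finsupp.single_apply, if_neg (fun he : (i:ℕ) = j => h (he ▸ i.isLt))]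

end Embed

/-- In characteristic `p`, given a nonzero `𝔽_p`-subspace `W` of `k` (equivalently, a
nonzero additive subgroup) with countable quotient `k/W`, there is a sequence of additive
polynomial maps `q_n : kⁿ → k` whose graphs `U_{n+1} = {(x, q_n x)}` (with `U_1 = {0}`)
form an increasing chain whose union `U = ⋃ U_n` inside `⊕_m k` is a direct complement of
`W` embedded in the first coordinate. -/
theorem exists_additive_graphs_complementing
    (p : ℕ) (hp : p.Prime) (k : Type*) [Field k] [IsAlgClosed k] [CharP k p]
    (W : AddSubgroup k) (hW : W ≠ ⊥) (hcount : Countable (k ⧸ W)) :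
    ∃ (q : (n : ℕ) → (Fin n → k) → k) (U : (n : ℕ) → Set (Fin n → k))
      (Uhat : Set (ℕ →₀ k)),
      (∀ n, 1 ≤ n → IsAdditivePolyMap p (q n)) ∧
      U 1 = {0} ∧
      (∀ n, 1 ≤ n → U (n + 1) = {y | ∃ x : Fin n → k, y = Fin.snoc x (q n x)}) ∧
      (∀ n, 1 ≤ n → ∀ x ∈ U n, Fin.snoc x (0 : k) ∈ U (n + 1)) ∧
      (Uhat = ⋃ n, ⋃ (_ : 1 ≤ n), embedFin n '' U n) ∧
      (∀ z : ℕ →₀ k, ∃ u ∈ Uhat, ∃ w ∈ W, z = u + Finsupp.single 0 w) ∧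
      (∀ u ∈ Uhat, ∀ w ∈ W, u = Finsupp.single 0 w → u = 0) := by
  classical
  -- enumeration of coset representatives
  obtain ⟨e, he⟩ := exists_surjective_nat (k ⧸ W)
  have hrex : ∀ ℓ : ℕ, ∃ x : k, (x : k ⧸ W) = e ℓ := fun ℓ => QuotientAddGroup.mk_surjective (e ℓ)
  choose r hr using hrex
  have hrW : ∀ c : k, ∃ ℓ, c - r ℓ ∈ W := by
    intro c
    obtain ⟨ℓ, hℓ⟩ := he ((c : k ⧸ W))
    refine ⟨ℓ, ?_⟩
    have : ((r ℓ : k) : k ⧸ W) = (c : k ⧸ W) := by rw [hr ℓ, hℓ]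
    have h2 := (QuotientAddGroup.eq (s := W)).mp this
    simpa [neg_add_eq_sub] using h2
  -- the objects
  set U : (n : ℕ) → Set (Fin n → k) :=
    fun n => Nat.rec (motive := fun n => Set (Fin n → k)) ∅
      (fun ℓ _ => {y : Fin (ℓ+1) → k | Phi p W r ℓ y = 0}) n with hU
  refine ⟨qmap p W r, U, ⋃ n, ⋃ (_ : 1 ≤ n), embedFin n '' U n, ?_, ?_, ?_, ?_, rfl, ?_, ?_⟩
  -- 1: additive polynomial maps
  · intro n hn
    obtain ⟨ℓ, rfl⟩ : ∃ ℓ, n = ℓ + 1 := ⟨n - 1, by omega⟩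
    exact qmap_ap W r hp ℓ
  -- 2: U 1 = {0}
  · ext y
    show Phi p W r 0 y = 0 ↔ y ∈ ({0} : Set (Fin 1 → k))
    simp only [Set.mem_singleton_iff]
    constructor
    · intro h
      funext i
      rw [Subsingleton.elim i 0]
      exact h
    · rintro rfl
      rfl
  -- 3: graphs
  · intro n hn
    obtain ⟨ℓ, rfl⟩ : ∃ ℓ, n = ℓ + 1 := ⟨n - 1, by omega⟩
    ext y
    show Phi p W r (ℓ+1) y = 0 ↔ _
    simp only [Set.mem_setOf_eq]
    constructor
    · intro h
      refine ⟨Fin.init y, ?_⟩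
      have hlast : y (Fin.last (ℓ+1)) = qmap p W r (ℓ+1) (Fin.init y) := by
        rw [Phi_succ] at h
        show _ = bb p W r ℓ * Phi p W r ℓ (Fin.init y) - (Phi p W r ℓ (Fin.init y)) ^ p
        linear_combination h
      conv_lhs => rw [← Fin.snoc_init_self y]
      rw [hlast]
    · rintro ⟨x, rfl⟩
      rw [Phi_succ]
      rw [Fin.init_snoc, Fin.snoc_last]
      show qmap p W r (ℓ+1) x + _ = 0
      have : qmap p W r (ℓ+1) x = bb p W r ℓ * Phi p W r ℓ x - (Phi p W r ℓ x) ^ p := rfl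
      rw [this]
      ring
  -- 4: nesting
  · intro n hn x hx
    obtain ⟨ℓ, rfl⟩ : ∃ ℓ, n = ℓ + 1 := ⟨n - 1, by omega⟩
    have hx' : Phi p W r ℓ x = 0 := hx
    show Phi p W r (ℓ+1) (Fin.snoc x 0) = 0
    rw [Phi_succ, Fin.snoc_last, Fin.init_snoc, hx', zero_pow hp.ne_zero, mul_zero, sub_zero,
      add_zero]
  -- 6: covering
  · intro z
    set ℓ := z.support.sup id with hℓdef
    have hz : ∀ j : ℕ, ℓ + 1 ≤ j → z j = 0 := by
      intro j hj
      by_contra hne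
      have hmem : j ∈ z.support := Finsupp.mem_support_iff.mpr hne
      have := Finset.le_sup (f := id) hmem
      simp only [id] at this
      omega
    set x : Fin (ℓ+1) → k := fun i => z i with hx
    obtain ⟨c, hc⟩ := Scomp_surjective W r hp ℓ (Phi p W r ℓ x)
    obtain ⟨m, w, hwW, hm0⟩ := Scomp_cover W r hp hrW c
    set M := ℓ + m with hM
    set xpad : Fin (M+1) → k := fun i => if h : (i:ℕ) < ℓ+1 then x ⟨i, h⟩ else 0 with hxpad
    set we0 : Fin (M+1) → k := fun i => if (i:ℕ) = 0 then w else 0 with hwe0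
    have hppad : Phi p W r M xpad = Scomp p W r M c := by
      rw [Phi_pad W r hp (by omega : ℓ ≤ M) xpad
        (fun i hi => by rw [hxpad]; exact dif_neg (by omega))]
      have hres : (fun i : Fin (ℓ+1) => xpad (Fin.castLE (by omega) i)) = x := by
        funext i
        rw [hxpad]
        show (if h : ((Fin.castLE _ i : Fin (M+1)) : ℕ) < ℓ+1 then x ⟨_, h⟩ else 0) = x i
        rw [dif_pos (by simpa using i.isLt)]
        exact congrArg x (Fin.ext rfl)
      rw [hres, ← hc, ← Scomp_eq_Tcomp W r hp (by omega : ℓ ≤ M)]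
    have hpwe0 : Phi p W r M we0 = Scomp p W r M w := by
      have := Phi_e0 W r hp M w
      rw [← this]
    have hPhiy : Phi p W r M (xpad - we0) = 0 := by
      rw [Phi_sub W r hp, hppad, hpwe0, ← Scomp_sub W r hp,
        Scomp_eq_Tcomp W r hp (by omega : m ≤ M), hm0, Tcomp_zeroval W r hp]
    have hyU : (xpad - we0) ∈ U (M+1) := hPhiy
    refine ⟨embedFin (M+1) (xpad - we0),
      Set.mem_iUnion.mpr ⟨M+1, Set.mem_iUnion.mpr ⟨by omega, Set.mem_image_of_mem _ hyU⟩⟩,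
      w, hwW, ?_⟩
    ext j
    rw [Finsupp.add_apply, embedFin_apply, Finsupp.single_apply]
    by_cases hj0 : j = 0
    · subst hj0
      rw [dif_pos (by omega : (0:ℕ) < M+1), if_pos rfl]
      show z 0 = ((if h : (0:ℕ) < ℓ+1 then x ⟨0, h⟩ else 0) - (if (0:ℕ) = 0 then w else 0)) + w
      rw [dif_pos (by omega : (0:ℕ) < ℓ+1), if_pos rfl]
      show z 0 = z 0 - w + w
      ring
    · rw [if_neg (fun h => hj0 h.symm), add_zero]
      by_cases hjM : j < M + 1
      · rw [dif_pos hjM]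
        show z j = (if h : (j:ℕ) < ℓ+1 then x ⟨j, h⟩ else 0) - (if (j:ℕ) = 0 then w else 0)
        rw [if_neg hj0, sub_zero]
        by_cases hjℓ : j < ℓ + 1
        · rw [dif_pos hjℓ]
        · rw [dif_neg hjℓ]
          exact hz j (by omega)
      · rw [dif_neg hjM]
        exact hz j (by omega)
  -- 7: trivial intersection
  · intro u hu w hw hcast
    simp only [Set.mem_iUnion] at hu
    obtain ⟨n, hn, y, hyU, rfl⟩ := hu
    obtain ⟨ℓ, rfl⟩ : ∃ ℓ, n = ℓ + 1 := ⟨n - 1, by omega⟩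
    have hyPhi : Phi p W r ℓ y = 0 := hyU
    have hyform : y = fun i : Fin (ℓ+1) => if (i:ℕ) = 0 then w else 0 := by
      funext i
      have happ := congrArg (fun f : ℕ →₀ k => f (i : ℕ)) hcast
      rw [embedFin_apply, Finsupp.single_apply] at happ
      rw [dif_pos i.isLt] at happ
      have : y ⟨(i:ℕ), i.isLt⟩ = y i := congrArg y (Fin.ext rfl)
      rw [this] at happ
      rw [happ]
      by_cases h0 : (i:ℕ) = 0
      · rw [if_pos h0.symm, if_pos h0]
      · rw [if_neg (fun h => h0 h.symm), if_neg h0]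
    rw [hyform, Phi_e0 W r hp] at hyPhi
    have hw0 : w = 0 := Scomp_injW W r hp ℓ w hw hyPhi
    rw [hcast, hw0, Finsupp.single_zero]
end

section
/- Let K ⊆ 𝕂 be an extension of fields, M a K-vector space, and G a group acting on M by K-linear automorphisms, extended to M ⊗_K 𝕂 by 𝕂-linear automorphisms via g(m ⊗ c) = g(m) ⊗ c. If every finite-dimensional 𝕂-subspace of M ⊗_K 𝕂 is contained in a G-stable finite-dimensional 𝕂-subspace, then every finite-dimensional K-subspace of M is contained in a G-stable finite-dimensional K-subspace of M. -/
/-!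
A `G`-stable finite-dimensional `W ⊆ 𝕂 ⊗[K] M` containing `𝕂 ⊗[K] V` descends to
`W ∩ M := {m | 1 ⊗ m ∈ W}`, which contains `V` and is `G`-stable. It is finite dimensional
because `𝕂` is flat over `K`, so that `𝕂 ⊗[K] (W ∩ M)` embeds into `W`, and finiteness descends
along the faithfully flat extension `K → 𝕂`.
-/

open TensorProduct

namespace Submodule

section Semiring

variable {R A M : Type*} [CommSemiring R] [Semiring A] [Algebra R A]
  [AddCommMonoid M] [Module R M]

def descend (W : Submodule A (A ⊗[R] M)) : Submodule R M :=
  (W.restrictScalars R).comap (TensorProduct.mk R A M 1)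

@[simp]
theorem mem_descend {W : Submodule A (A ⊗[R] M)} {m : M} : m ∈ W.descend ↔ 1 ⊗ₜ m ∈ W :=
  Iff.rfl

theorem baseChange_le_iff_le_descend {p : Submodule R M} {W : Submodule A (A ⊗[R] M)} :
    p.baseChange A ≤ W ↔ p ≤ W.descend := by
  rw [baseChange_eq_span, span_le]
  exact map_le_iff_le_comap (f := TensorProduct.mk R A M 1) (q := W.restrictScalars R)

theorem mapsTo_descend {W : Submodule A (A ⊗[R] M)} {f : M →ₗ[R] M}
    (hf : Set.MapsTo (f.baseChange A) W W) : Set.MapsTo f W.descend W.descend :=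
  fun _ hm ↦ by simpa using hf hm

instance finite_baseChange (p : Submodule R M) [Module.Finite R p] :
    Module.Finite A (p.baseChange A) := by
  unfold baseChange
  infer_instance

end Semiring

variable {R A M : Type*} [CommRing R] [CommRing A] [Algebra R A] [IsNoetherianRing A]
  [Module.FaithfullyFlat R A] [AddCommGroup M] [Module R M]

theorem finite_descend (W : Submodule A (A ⊗[R] M)) [Module.Finite A W] :
    Module.Finite R W.descend := by
  have : IsNoetherian A W := isNoetherian_of_isNoetherianRing_of_finite A W
  have hle : W.descend.baseChange A ≤ W := baseChange_le_iff_le_descend.mpr le_rfl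
  have : Module.Finite A (W.descend.baseChange A) :=
    .of_injective (inclusion hle) (inclusion_injective hle)
  have : Module.Finite A (A ⊗[R] W.descend) :=
    .equiv (toBaseChange.toLinearEquiv A W.descend).symm
  exact .of_finite_tensorProduct_of_faithfullyFlat A

end Submodule

/-- Descent of local finiteness along a field extension `K ⊆ 𝕂`: if a group `G` acts on a
`K`-vector space `M` by `K`-linear automorphisms, and every finite-dimensional `𝕂`-subspace
of the base change `𝕂 ⊗[K] M` is contained in a `G`-stable finite-dimensional `𝕂`-subspace,
then every finite-dimensional `K`-subspace of `M` is contained in a `G`-stable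
finite-dimensional `K`-subspace. -/
theorem locally_finite_of_locally_finite_baseChange
    (K 𝕂 : Type*) [Field K] [Field 𝕂] [Algebra K 𝕂]
    (M : Type*) [AddCommGroup M] [Module K M]
    (G : Type*) [Group G] (ρ : G →* (M ≃ₗ[K] M))
    (h : ∀ V : Submodule 𝕂 (𝕂 ⊗[K] M), FiniteDimensional 𝕂 V →
      ∃ W : Submodule 𝕂 (𝕂 ⊗[K] M), FiniteDimensional 𝕂 W ∧ V ≤ W ∧
        ∀ g : G, ∀ w ∈ W, LinearMap.baseChange 𝕂 (ρ g : M →ₗ[K] M) w ∈ W) :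
    ∀ V : Submodule K M, FiniteDimensional K V →
      ∃ W : Submodule K M, FiniteDimensional K W ∧ V ≤ W ∧
        ∀ g : G, ∀ w ∈ W, ρ g w ∈ W := by
  intro V _
  obtain ⟨W, _, hVW, hW⟩ := h (V.baseChange 𝕂) inferInstance
  exact ⟨W.descend, W.finite_descend, Submodule.baseChange_le_iff_le_descend.mp hVW,
    fun g ↦ Submodule.mapsTo_descend (hW g)⟩
end
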